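/- arXiv:2209.03259 — 7 statements merged into one kernel-verified Lean document; each statement's English description precedes it below -/
import Mathlib

section
/- Suppose Z is a real n×k matrix such that the projection matrix P := Z(ZᵀZ)^{-1}Zᵀ has rank k, and there exists 0 < δ < 1 with max_{1≤i≤n} P_{ii} ≤ 1 − δ. Then there exists γ⁰ ≥ 0 such that ∑_{i=1}^n ∑_{j≠i} (P^{γ⁰}_{ij})² ≥ (δ/2)·k; consequently, the maximiser γ* of γ ↦ ∑_{i=1}^n ∑_{j≠i} (P^γ_{ij})² over γ ≥ 0 satisfies ∑_{i=1}^n ∑_{j≠i} (P^{γ*}_{ij})² ≥ (δ/2)·k, i.e. Assumption 3 holds with ω = 1 and c = δ/2. -/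
open Matrix Finset

/-- The ridge-regularised projection matrix `P^γ = Z (ZᵀZ + γ I)⁻¹ Zᵀ`. -/
noncomputable def ridgeP {n k : ℕ} (Z : Matrix (Fin n) (Fin k) ℝ) (γ : ℝ) :
    Matrix (Fin n) (Fin n) ℝ :=
  Z * (Zᵀ * Z + γ • (1 : Matrix (Fin k) (Fin k) ℝ))⁻¹ * Zᵀ

/-- If the projection matrix `P = Z(ZᵀZ)⁻¹Zᵀ` has rank `k` and a balanced design
(`max_i P_ii ≤ 1 - δ` for some `0 < δ < 1`), then there is a ridge penalty `γ⁰ ≥ 0` whose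
off-diagonal squared mass is at least `(δ/2)·k`; consequently any maximiser `γ*` of
`γ ↦ ∑_{i} ∑_{j ≠ i} (P^γ_{ij})²` over `γ ≥ 0` also achieves at least `(δ/2)·k`,
i.e. Assumption 3 holds with `ω = 1` and `c = δ/2`. -/
theorem balanced_design_implies_assumption3
    {n k : ℕ} (hn : 0 < n) (hk : 0 < k)
    (Z : Matrix (Fin n) (Fin k) ℝ)
    (hinv : IsUnit (Zᵀ * Z).det)
    (hrank : Z.rank = k)
    (δ : ℝ) (hδ0 : 0 < δ) (hδ1 : δ < 1)
    (hdiag : ∀ i : Fin n, (Z * (Zᵀ * Z)⁻¹ * Zᵀ) i i ≤ 1 - δ) :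
    (∃ γ₀ : ℝ, 0 ≤ γ₀ ∧
      (δ / 2) * (k : ℝ) ≤
        ∑ i : Fin n, ∑ j ∈ Finset.univ.erase i, (ridgeP Z γ₀ i j) ^ 2) ∧
    (∀ γs : ℝ, 0 ≤ γs →
      (∀ γ : ℝ, 0 ≤ γ →
        (∑ i : Fin n, ∑ j ∈ Finset.univ.erase i, (ridgeP Z γ i j) ^ 2) ≤
          ∑ i : Fin n, ∑ j ∈ Finset.univ.erase i, (ridgeP Z γs i j) ^ 2) →
      (δ / 2) * (k : ℝ) ≤
        ∑ i : Fin n, ∑ j ∈ Finset.univ.erase i, (ridgeP Z γs i j) ^ 2) := by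
  set P := Z * (Zᵀ * Z)⁻¹ * Zᵀ with hPdef
  have hP0 : ridgeP Z 0 = P := by
    simp [ridgeP, hPdef]
  have h1 : (Zᵀ * Z)⁻¹ * (Zᵀ * Z) = 1 := Matrix.nonsing_inv_mul _ hinv
  have hsymm : ∀ i j, P j i = P i j := by
    intro i j
    have hT : Pᵀ = P := by
      rw [hPdef]
      rw [Matrix.transpose_mul, Matrix.transpose_mul, Matrix.transpose_nonsing_inv,
        Matrix.transpose_mul, Matrix.transpose_transpose, Matrix.mul_assoc]
    calc P j i = Pᵀ i j := rfl
    _ = P i j := by rw [hT]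
  have hidem : P * P = P := by
    rw [hPdef]
    calc Z * (Zᵀ * Z)⁻¹ * Zᵀ * (Z * (Zᵀ * Z)⁻¹ * Zᵀ)
        = Z * (((Zᵀ * Z)⁻¹ * (Zᵀ * Z)) * ((Zᵀ * Z)⁻¹ * Zᵀ)) := by
          simp only [Matrix.mul_assoc]
      _ = Z * (Zᵀ * Z)⁻¹ * Zᵀ := by rw [h1, Matrix.one_mul, Matrix.mul_assoc]
  have hdiagsum : ∀ i, ∑ j, P i j ^ 2 = P i i := by
    intro i
    have := congrFun (congrFun hidem i) i
    simp only [Matrix.mul_apply] at this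
    calc ∑ j, P i j ^ 2 = ∑ j, P i j * P j i := by
          refine Finset.sum_congr rfl fun j _ => ?_
          rw [hsymm i j]; ring
      _ = P i i := this
  have hdnn : ∀ i, 0 ≤ P i i := by
    intro i
    rw [← hdiagsum i]
    exact Finset.sum_nonneg fun j _ => sq_nonneg _
  have hrow : ∀ i, ∑ j ∈ Finset.univ.erase i, P i j ^ 2 = P i i - P i i ^ 2 := by
    intro i
    rw [Finset.sum_erase_eq_sub (Finset.mem_univ i), hdiagsum i]
  have htr : ∑ i, P i i = (k : ℝ) := by
    have : P.trace = (k : ℝ) := by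
      rw [hPdef, Matrix.trace_mul_comm, ← Matrix.mul_assoc,
        Matrix.mul_nonsing_inv _ hinv, Matrix.trace_one]
      simp
    simpa [Matrix.trace, Matrix.diag] using this
  have key : (δ / 2) * (k : ℝ) ≤ ∑ i : Fin n, ∑ j ∈ Finset.univ.erase i, (P i j) ^ 2 := by
    have h2 : ∀ i, δ * P i i ≤ P i i - P i i ^ 2 := by
      intro i
      have := hdiag i
      nlinarith [hdnn i]
    calc (δ / 2) * (k : ℝ) ≤ δ * (k : ℝ) := by
          have : (0:ℝ) ≤ (k:ℝ) := Nat.cast_nonneg k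
          nlinarith
      _ = ∑ i, δ * P i i := by rw [← Finset.mul_sum, htr]
      _ ≤ ∑ i, (P i i - P i i ^ 2) := Finset.sum_le_sum fun i _ => h2 i
      _ = ∑ i : Fin n, ∑ j ∈ Finset.univ.erase i, (P i j) ^ 2 := by
          refine Finset.sum_congr rfl fun i _ => (hrow i).symm
  constructor
  · exact ⟨0, le_rfl, by rw [hP0]; exact key⟩
  · intro γs hγs hmax
    refine le_trans ?_ (hmax 0 le_rfl)
    rw [hP0]; exact key
end

section
/- For every subset I₂ of {1,…,n}², the sum ∑_{(i,j)∈I₂} (P^γ_{ij})⁴ is at most r, where r = rank(Z). -/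
open Matrix Finset

lemma expand_aux {n k : ℕ} (W : Matrix (Fin n) (Fin k) ℝ) (μ : Fin k → ℝ)
    (horth : ∀ i j, ∑ x, W x i * W x j = if i = j then μ i else 0)
    (g h : Fin k → ℝ) :
    ∑ x, (∑ i, g i * W x i) * (∑ j, h j * W x j) = ∑ i, g i * h i * μ i := by
  have step1 : ∀ x, (∑ i, g i * W x i) * (∑ j, h j * W x j)
      = ∑ i, ∑ j, (g i * h j) * (W x i * W x j) := by
    intro x
    rw [Finset.sum_mul_sum]
    exact Finset.sum_congr rfl fun i _ => Finset.sum_congr rfl fun j _ => by ring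
  calc ∑ x, (∑ i, g i * W x i) * (∑ j, h j * W x j)
      = ∑ x, ∑ i, ∑ j, (g i * h j) * (W x i * W x j) :=
        Finset.sum_congr rfl fun x _ => step1 x
    _ = ∑ i, ∑ x, ∑ j, (g i * h j) * (W x i * W x j) := Finset.sum_comm
    _ = ∑ i, ∑ j, (g i * h j) * ∑ x, (W x i * W x j) := by
        refine Finset.sum_congr rfl fun i _ => ?_
        rw [Finset.sum_comm]
        exact Finset.sum_congr rfl fun j _ => (Finset.mul_sum _ _ _).symm
    _ = ∑ i, g i * h i * μ i := by
        refine Finset.sum_congr rfl fun i _ => ?_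
        rw [Finset.sum_eq_single i]
        · rw [horth i i, if_pos rfl]
        · intro j _ hj
          rw [horth i j, if_neg fun hij => hj hij.symm, mul_zero]
        · intro hi; exact absurd (Finset.mem_univ i) hi

lemma bessel_aux {n k : ℕ} (W : Matrix (Fin n) (Fin k) ℝ) (μ : Fin k → ℝ)
    (horth : ∀ i j, ∑ x, W x i * W x j = if i = j then μ i else 0) (a : Fin n) :
    ∑ i, (if μ i = 0 then (0:ℝ) else (W a i)^2 / μ i) ≤ 1 := by
  classical
  set c : Fin k → ℝ := fun i => if μ i = 0 then 0 else W a i / μ i with hc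
  have hμ0 : ∀ i, μ i = 0 → W a i = 0 := by
    intro i hi
    have h := horth i i
    rw [if_pos rfl, hi] at h
    have := (Finset.sum_eq_zero_iff_of_nonneg
      (fun x _ => mul_self_nonneg (W x i))).mp h a (Finset.mem_univ a)
    exact mul_self_eq_zero.mp this
  set T := ∑ i, (if μ i = 0 then (0:ℝ) else (W a i)^2 / μ i) with hT
  have hcW : ∑ i, c i * W a i = T := by
    refine Finset.sum_congr rfl fun i _ => ?_
    by_cases hi : μ i = 0
    · simp [hc, hi]
    · simp only [hc, hi, if_false]; ring
  have hs2 : ∑ x, (∑ i, c i * W x i) * (∑ j, c j * W x j) = T := by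
    rw [expand_aux W μ horth c c]
    refine Finset.sum_congr rfl fun i _ => ?_
    by_cases hi : μ i = 0
    · simp [hc, hi]
    · simp only [hc, hi, if_false]
      field_simp
  have key : (0:ℝ) ≤ 1 - T := by
    have expand : ∑ x, ((if x = a then (1:ℝ) else 0) - ∑ i, c i * W x i)^2
        = 1 - 2*T + T := by
      have e1 : ∀ x, ((if x = a then (1:ℝ) else 0) - ∑ i, c i * W x i)^2
          = (if x = a then (1:ℝ) else 0)
            - 2 * ((if x = a then (1:ℝ) else 0) * ∑ i, c i * W x i)
            + (∑ i, c i * W x i) * (∑ j, c j * W x j) := by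
        intro x
        by_cases hx : x = a <;> simp [hx] <;> ring
      rw [Finset.sum_congr rfl fun x _ => e1 x]
      rw [Finset.sum_add_distrib, Finset.sum_sub_distrib, hs2]
      congr 1
      congr 1
      · simp
      · rw [← Finset.mul_sum]
        congr 1
        simp only [ite_mul, one_mul, zero_mul, Finset.sum_ite_eq', Finset.mem_univ,
          if_true, hcW]
    have hnn : (0:ℝ) ≤ ∑ x, ((if x = a then (1:ℝ) else 0) - ∑ i, c i * W x i)^2 :=
      Finset.sum_nonneg fun x _ => sq_nonneg _
    rw [expand] at hnn
    linarith
  linarith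

set_option maxHeartbeats 1000000 in
/-- For every subset `I₂` of `{1,…,n}²`, `∑_{(i,j) ∈ I₂} (P^γ_{ij})⁴ ≤ rank(Z)`. -/
theorem ridgeP_fourth_power_sum_le_rank
    {n k : ℕ} (hn : 0 < n) (hk : 0 < k)
    (Z : Matrix (Fin n) (Fin k) ℝ) (hr : 0 < Z.rank)
    (γ : ℝ) (hγ0 : 0 ≤ γ) (hγpos : Z.rank < k → 0 < γ)
    (I₂ : Finset (Fin n × Fin n)) :
    ∑ p ∈ I₂, (ridgeP Z γ p.1 p.2) ^ 4 ≤ (Z.rank : ℝ) := by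
  classical
  have hA : (Zᵀ * Z).PosSemidef := by
    have := Matrix.posSemidef_conjTranspose_mul_self Z
    rwa [Matrix.conjTranspose_eq_transpose_of_trivial] at this
  have hH : (Zᵀ * Z).IsHermitian := hA.1
  set μ : Fin k → ℝ := hH.eigenvalues with hμdef
  set U : Matrix (Fin k) (Fin k) ℝ :=
    (Matrix.IsHermitian.eigenvectorUnitary hH : Matrix (Fin k) (Fin k) ℝ) with hUdef
  have hmem := (Matrix.IsHermitian.eigenvectorUnitary hH).2
  rw [Unitary.mem_iff] at hmem
  have hU1 : Uᵀ * U = 1 := by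
    have := hmem.1
    rwa [Matrix.star_eq_conjTranspose, Matrix.conjTranspose_eq_transpose_of_trivial] at this
  have hU2 : U * Uᵀ = 1 := by
    have := hmem.2
    rwa [Matrix.star_eq_conjTranspose, Matrix.conjTranspose_eq_transpose_of_trivial] at this
  have hspec : Zᵀ * Z = U * Matrix.diagonal μ * Uᵀ := by
    have := hH.spectral_theorem
    rwa [Unitary.conjStarAlgAut_apply, Matrix.star_eq_conjTranspose, Matrix.conjTranspose_eq_transpose_of_trivial,
      show RCLike.ofReal ∘ hH.eigenvalues = μ from rfl] at this
  have hμnn : ∀ i, 0 ≤ μ i := fun i => hA.eigenvalues_nonneg i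
  have hrank : Fintype.card {i // μ i ≠ 0} = Z.rank := by
    rw [← hH.rank_eq_card_non_zero_eigs, Matrix.rank_transpose_mul_self]
  have hpos : ∀ i, 0 < μ i + γ := by
    intro i
    rcases lt_or_eq_of_le hγ0 with hγ | hγ
    · exact add_pos_of_nonneg_of_pos (hμnn i) hγ
    · have hk' : ¬ Z.rank < k := fun h => absurd (hγpos h) (by rw [← hγ]; exact lt_irrefl 0)
      have hrk : Z.rank = k := le_antisymm (Z.rank_le_width) (not_lt.mp hk')
      have hne : μ i ≠ 0 := by
        intro hi
        have := Fintype.card_subtype_lt (p := fun j => μ j ≠ 0) (x := i) (by simpa using hi)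
        rw [hrank, hrk, Fintype.card_fin] at this
        exact lt_irrefl k this
      have := lt_of_le_of_ne (hμnn i) (Ne.symm hne)
      linarith
  set W : Matrix (Fin n) (Fin k) ℝ := Z * U with hWdef
  have hWtW : Wᵀ * W = Matrix.diagonal μ := by
    calc Wᵀ * W = Uᵀ * (Zᵀ * Z) * U := by
          rw [hWdef, Matrix.transpose_mul]
          simp only [Matrix.mul_assoc]
      _ = Uᵀ * (U * Matrix.diagonal μ * Uᵀ) * U := by rw [hspec]
      _ = (Uᵀ * U) * Matrix.diagonal μ * (Uᵀ * U) := by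
          simp only [mul_assoc]
      _ = Matrix.diagonal μ := by rw [hU1]; simp
  have horth : ∀ i j, ∑ x, W x i * W x j = if i = j then μ i else 0 := by
    intro i j
    have h := congrFun (congrFun hWtW i) j
    rw [Matrix.mul_apply] at h
    simp only [Matrix.transpose_apply, Matrix.diagonal_apply] at h
    exact h
  have hcol0 : ∀ i, μ i = 0 → ∀ x, W x i = 0 := by
    intro i hi x
    have h := horth i i
    rw [if_pos rfl, hi] at h
    exact mul_self_eq_zero.mp
      ((Finset.sum_eq_zero_iff_of_nonneg (fun y _ => mul_self_nonneg (W y i))).mp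
        h x (Finset.mem_univ x))
  -- inverse of the regularised Gram matrix
  have hdiaginv : Matrix.diagonal (fun i => μ i + γ) *
      Matrix.diagonal (fun i => (μ i + γ)⁻¹) = 1 := by
    rw [Matrix.diagonal_mul_diagonal]
    rw [show (fun i => (μ i + γ) * (μ i + γ)⁻¹) = fun _ => (1:ℝ) from
      funext fun i => mul_inv_cancel₀ (hpos i).ne']
    exact Matrix.diagonal_one
  have hAγ : Zᵀ * Z + γ • (1 : Matrix (Fin k) (Fin k) ℝ)
      = U * Matrix.diagonal (fun i => μ i + γ) * Uᵀ := by
    have h1 : Matrix.diagonal (fun i => μ i + γ)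
        = Matrix.diagonal μ + γ • (1 : Matrix (Fin k) (Fin k) ℝ) := by
      ext i j
      by_cases h : i = j
      · subst h
        simp [Matrix.one_apply]
      · simp [Matrix.diagonal_apply_ne _ h, Matrix.one_apply_ne h]
    rw [h1, mul_add, add_mul, ← hspec]
    congr 1
    rw [Matrix.mul_smul, Matrix.smul_mul, mul_one, hU2]
  have hinv : (Zᵀ * Z + γ • (1 : Matrix (Fin k) (Fin k) ℝ))⁻¹
      = U * Matrix.diagonal (fun i => (μ i + γ)⁻¹) * Uᵀ := by
    apply Matrix.inv_eq_right_inv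
    rw [hAγ]
    calc U * Matrix.diagonal (fun i => μ i + γ) * Uᵀ *
          (U * Matrix.diagonal (fun i => (μ i + γ)⁻¹) * Uᵀ)
        = U * (Matrix.diagonal (fun i => μ i + γ) * (Uᵀ * U) *
            Matrix.diagonal (fun i => (μ i + γ)⁻¹)) * Uᵀ := by
          simp only [mul_assoc]
      _ = 1 := by rw [hU1, mul_one, hdiaginv, mul_one, hU2]
  have hPentry : ∀ a b, ridgeP Z γ a b = ∑ i, (μ i + γ)⁻¹ * (W a i * W b i) := by
    intro a b
    have hmat : ridgeP Z γ = W * Matrix.diagonal (fun i => (μ i + γ)⁻¹) * Wᵀ := by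
      rw [ridgeP, hinv, hWdef, Matrix.transpose_mul]
      simp only [Matrix.mul_assoc]
    rw [hmat]
    rw [Matrix.mul_apply]
    refine Finset.sum_congr rfl fun i _ => ?_
    rw [Matrix.mul_diagonal, Matrix.transpose_apply]
    ring
  have hdiag0 : ∀ a, 0 ≤ ridgeP Z γ a a := by
    intro a
    rw [hPentry]
    exact Finset.sum_nonneg fun i _ =>
      mul_nonneg (inv_nonneg.mpr (hpos i).le) (mul_self_nonneg _)
  have hdiag1 : ∀ a, ridgeP Z γ a a ≤ 1 := by
    intro a
    rw [hPentry]
    refine le_trans (Finset.sum_le_sum fun i _ => ?_) (bessel_aux W μ horth a)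
    by_cases hi : μ i = 0
    · rw [if_pos hi, hcol0 i hi a]
      simp
    · rw [if_neg hi]
      have hμpos : 0 < μ i := lt_of_le_of_ne (hμnn i) (Ne.symm hi)
      have hle : (μ i + γ)⁻¹ ≤ (μ i)⁻¹ := by
        apply inv_anti₀ hμpos
        linarith
      calc (μ i + γ)⁻¹ * (W a i * W a i) ≤ (μ i)⁻¹ * (W a i * W a i) :=
            mul_le_mul_of_nonneg_right hle (mul_self_nonneg _)
        _ = W a i ^ 2 / μ i := by rw [div_eq_inv_mul]; ring
  have hsq1 : ∀ a b, (ridgeP Z γ a b)^2 ≤ 1 := by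
    intro a b
    have hcs : (ridgeP Z γ a b)^2 ≤ ridgeP Z γ a a * ridgeP Z γ b b := by
      rw [hPentry a b, hPentry a a, hPentry b b]
      have key := Finset.sum_mul_sq_le_sq_mul_sq Finset.univ
        (fun i => W a i * Real.sqrt (μ i + γ)⁻¹)
        (fun i => W b i * Real.sqrt (μ i + γ)⁻¹)
      have hss : ∀ i, Real.sqrt (μ i + γ)⁻¹ * Real.sqrt (μ i + γ)⁻¹ = (μ i + γ)⁻¹ :=
        fun i => Real.mul_self_sqrt (inv_nonneg.mpr (hpos i).le)
      have e1 : ∀ (u v : Fin n),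
          ∑ i, (W u i * Real.sqrt (μ i + γ)⁻¹) * (W v i * Real.sqrt (μ i + γ)⁻¹)
            = ∑ i, (μ i + γ)⁻¹ * (W u i * W v i) := by
        intro u v
        refine Finset.sum_congr rfl fun i _ => ?_
        calc (W u i * Real.sqrt (μ i + γ)⁻¹) * (W v i * Real.sqrt (μ i + γ)⁻¹)
            = (Real.sqrt (μ i + γ)⁻¹ * Real.sqrt (μ i + γ)⁻¹) * (W u i * W v i) := by ring
          _ = (μ i + γ)⁻¹ * (W u i * W v i) := by rw [hss i]
      have e2 : ∀ (u : Fin n),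
          ∑ i, (W u i * Real.sqrt (μ i + γ)⁻¹)^2
            = ∑ i, (μ i + γ)⁻¹ * (W u i * W u i) := by
        intro u
        refine Finset.sum_congr rfl fun i _ => ?_
        calc (W u i * Real.sqrt (μ i + γ)⁻¹)^2
            = (Real.sqrt (μ i + γ)⁻¹ * Real.sqrt (μ i + γ)⁻¹) * (W u i * W u i) := by ring
          _ = (μ i + γ)⁻¹ * (W u i * W u i) := by rw [hss i]
      rw [e1 a b, e2 a, e2 b] at key
      exact key
    calc (ridgeP Z γ a b)^2 ≤ ridgeP Z γ a a * ridgeP Z γ b b := hcs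
      _ ≤ 1 * 1 := mul_le_mul (hdiag1 a) (hdiag1 b) (hdiag0 b) zero_le_one
      _ = 1 := one_mul 1
  -- trace of P²
  have htr : ∑ a, ∑ b, (ridgeP Z γ a b)^2 = ∑ i, ((μ i + γ)⁻¹ * μ i)^2 := by
    have stage1 : ∀ a, ∑ b, (ridgeP Z γ a b)^2
        = ∑ i, ((μ i + γ)⁻¹ * W a i) * ((μ i + γ)⁻¹ * W a i) * μ i := by
      intro a
      calc ∑ b, (ridgeP Z γ a b)^2
          = ∑ b, (∑ i, ((μ i + γ)⁻¹ * W a i) * W b i) *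
              (∑ j, ((μ j + γ)⁻¹ * W a j) * W b j) := by
            refine Finset.sum_congr rfl fun b _ => ?_
            rw [hPentry, sq]
            congr 1 <;> exact Finset.sum_congr rfl fun i _ => by ring
        _ = ∑ i, ((μ i + γ)⁻¹ * W a i) * ((μ i + γ)⁻¹ * W a i) * μ i :=
            expand_aux W μ horth _ _
    calc ∑ a, ∑ b, (ridgeP Z γ a b)^2
        = ∑ a, ∑ i, ((μ i + γ)⁻¹ * W a i) * ((μ i + γ)⁻¹ * W a i) * μ i :=
          Finset.sum_congr rfl fun a _ => stage1 a
      _ = ∑ i, ((μ i + γ)⁻¹)^2 * μ i * ∑ a, W a i * W a i := by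
          rw [Finset.sum_comm]
          refine Finset.sum_congr rfl fun i _ => ?_
          rw [Finset.mul_sum]
          exact Finset.sum_congr rfl fun a _ => by ring
      _ = ∑ i, ((μ i + γ)⁻¹ * μ i)^2 := by
          refine Finset.sum_congr rfl fun i _ => ?_
          rw [horth i i, if_pos rfl]
          ring
  have step1 : ∑ p ∈ I₂, (ridgeP Z γ p.1 p.2) ^ 4
      ≤ ∑ p ∈ (Finset.univ : Finset (Fin n × Fin n)), (ridgeP Z γ p.1 p.2) ^ 4 :=
    Finset.sum_le_sum_of_subset_of_nonneg (Finset.subset_univ I₂)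
      (fun p _ _ => Even.pow_nonneg ⟨2, rfl⟩ _)
  have step2 : ∑ p ∈ (Finset.univ : Finset (Fin n × Fin n)), (ridgeP Z γ p.1 p.2) ^ 4
      ≤ ∑ p ∈ (Finset.univ : Finset (Fin n × Fin n)), (ridgeP Z γ p.1 p.2) ^ 2 := by
    refine Finset.sum_le_sum fun p _ => ?_
    have h1 := hsq1 p.1 p.2
    have h2 := sq_nonneg (ridgeP Z γ p.1 p.2)
    nlinarith
  have step3 : ∑ p ∈ (Finset.univ : Finset (Fin n × Fin n)), (ridgeP Z γ p.1 p.2) ^ 2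
      = ∑ a, ∑ b, (ridgeP Z γ a b)^2 := Fintype.sum_prod_type (f := fun p => ridgeP Z γ p.1 p.2 ^ 2)
  have step5 : ∑ i, ((μ i + γ)⁻¹ * μ i)^2 ≤ ∑ i, (if μ i ≠ 0 then (1:ℝ) else 0) := by
    refine Finset.sum_le_sum fun i _ => ?_
    by_cases hi : μ i = 0
    · simp [hi]
    · rw [if_pos hi]
      have hμpos : 0 < μ i := lt_of_le_of_ne (hμnn i) (Ne.symm hi)
      have hle1 : (μ i + γ)⁻¹ * μ i ≤ 1 := by
        rw [← div_eq_inv_mul]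
        rw [div_le_one (hpos i)]
        linarith
      have hge0 : 0 ≤ (μ i + γ)⁻¹ * μ i :=
        mul_nonneg (inv_nonneg.mpr (hpos i).le) hμpos.le
      nlinarith
  have step6 : ∑ i, (if μ i ≠ 0 then (1:ℝ) else 0) = (Z.rank : ℝ) := by
    rw [Finset.sum_boole, ← hrank, Fintype.card_subtype]
  calc ∑ p ∈ I₂, (ridgeP Z γ p.1 p.2) ^ 4
      ≤ ∑ p ∈ (Finset.univ : Finset (Fin n × Fin n)), (ridgeP Z γ p.1 p.2) ^ 4 := step1
    _ ≤ ∑ p ∈ (Finset.univ : Finset (Fin n × Fin n)), (ridgeP Z γ p.1 p.2) ^ 2 := step2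
    _ = ∑ a, ∑ b, (ridgeP Z γ a b)^2 := step3
    _ = ∑ i, ((μ i + γ)⁻¹ * μ i)^2 := htr
    _ ≤ ∑ i, (if μ i ≠ 0 then (1:ℝ) else 0) := step5
    _ = (Z.rank : ℝ) := step6
end

section
/- For every subset I₃ of {1,…,n}³, the sum ∑_{(i,j,l)∈I₃} (P^γ_{ij})² (P^γ_{jl})² is at most r, where r = rank(Z). -/
open Matrix Finset

/-- For every subset `I₃` of `{1,…,n}³`,
`∑_{(i,j,l) ∈ I₃} (P^γ_{ij})² (P^γ_{jl})² ≤ rank(Z)`. -/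
theorem ridgeP_triple_sum_le_rank
    {n k : ℕ} (hn : 0 < n) (hk : 0 < k)
    (Z : Matrix (Fin n) (Fin k) ℝ) (hr : 0 < Z.rank)
    (γ : ℝ) (hγ0 : 0 ≤ γ) (hγpos : Z.rank < k → 0 < γ)
    (I₃ : Finset (Fin n × Fin n × Fin n)) :
    ∑ t ∈ I₃, (ridgeP Z γ t.1 t.2.1) ^ 2 * (ridgeP Z γ t.2.1 t.2.2) ^ 2 ≤
      (Z.rank : ℝ) := by
  classical
  have hA : (Zᵀ * Z).IsHermitian := by
    have := isHermitian_conjTranspose_mul_self Z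
    rwa [conjTranspose_eq_transpose_of_trivial] at this
  have hPSD : (Zᵀ * Z).PosSemidef := by
    have := posSemidef_conjTranspose_mul_self Z
    rwa [conjTranspose_eq_transpose_of_trivial] at this
  set lam : Fin k → ℝ := hA.eigenvalues with hlamdef
  set U : Matrix (Fin k) (Fin k) ℝ := (hA.eigenvectorUnitary : Matrix (Fin k) (Fin k) ℝ)
    with hUdef
  have hlam0 : ∀ i, 0 ≤ lam i := fun i => hPSD.eigenvalues_nonneg i
  -- positivity of lam i + γ
  have hpos : ∀ i, 0 < lam i + γ := by
    rcases lt_or_eq_of_le (Matrix.rank_le_width Z) with h | h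
    · intro i; have := hγpos h; linarith [hlam0 i]
    · intro i
      have hrank : (Zᵀ * Z).rank = k := by rw [Matrix.rank_transpose_mul_self]; exact h
      have hcard : Fintype.card {i // lam i ≠ 0} = k := by
        rw [← hA.rank_eq_card_non_zero_eigs, hrank]
      have hnei : lam i ≠ 0 := by
        by_contra hj
        have h1 : Fintype.card {i // lam i ≠ 0} < Fintype.card (Fin k) := by
          apply Fintype.card_lt_of_injective_of_notMem (fun x => x.1) Subtype.val_injective
            (b := i)
          intro hmem
          obtain ⟨x, hx⟩ := hmem
          apply x.2
          rw [show (x.1 : Fin k) = i from hx]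
          exact hj
        rw [hcard, Fintype.card_fin] at h1
        exact lt_irrefl _ h1
      have := (hlam0 i).lt_of_ne (Ne.symm hnei)
      linarith
  have hne0 : ∀ i, lam i + γ ≠ 0 := fun i => (hpos i).ne'
  -- spectral decomposition pieces
  have hUstar : star U = Uᵀ := conjTranspose_eq_transpose_of_trivial U
  have hUU : star U * U = 1 := Unitary.coe_star_mul_self hA.eigenvectorUnitary
  have hUU' : U * star U = 1 := Unitary.coe_mul_star_self hA.eigenvectorUnitary
  have hspec : Zᵀ * Z = U * Matrix.diagonal lam * star U := by
    have := hA.spectral_theorem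
    simpa [RCLike.ofReal_real_eq_id] using this
  have hdiagA : star U * (Zᵀ * Z) * U = Matrix.diagonal lam := by
    have := hA.conjStarAlgAut_star_eigenvectorUnitary
    simpa [RCLike.ofReal_real_eq_id, Unitary.conjStarAlgAut_star_apply] using this
  set E : Matrix (Fin k) (Fin k) ℝ := Matrix.diagonal (fun i => (lam i + γ)⁻¹) with hEdef
  have hsmul : γ • (1 : Matrix (Fin k) (Fin k) ℝ) = Matrix.diagonal (fun _ => γ) := by
    ext i j
    by_cases h : i = j <;> simp [h, Matrix.one_apply]
  have hBspec : Zᵀ * Z + γ • (1 : Matrix (Fin k) (Fin k) ℝ)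
      = U * Matrix.diagonal (fun i => lam i + γ) * star U := by
    have h1 : Matrix.diagonal (fun i => lam i + γ)
        = Matrix.diagonal lam + Matrix.diagonal (fun _ : Fin k => γ) := by
      rw [Matrix.diagonal_add]
    rw [h1, Matrix.mul_add, Matrix.add_mul, ← hspec, hsmul]
    congr 1
    rw [← hsmul]
    rw [Matrix.mul_smul, Matrix.mul_one, Matrix.smul_mul, hUU']
  have hBinv : (Zᵀ * Z + γ • (1 : Matrix (Fin k) (Fin k) ℝ))⁻¹ = U * E * star U := by
    apply Matrix.inv_eq_right_inv
    rw [hBspec]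
    simp only [Matrix.mul_assoc]
    rw [← Matrix.mul_assoc (star U) U, hUU, Matrix.one_mul,
      ← Matrix.mul_assoc (Matrix.diagonal fun i => lam i + γ) E, hEdef,
      Matrix.diagonal_mul_diagonal]
    have : (fun i => (lam i + γ) * (lam i + γ)⁻¹) = fun _ : Fin k => (1 : ℝ) := by
      funext i; exact mul_inv_cancel₀ (hne0 i)
    rw [this, Matrix.diagonal_one, Matrix.one_mul, hUU']
  set V : Matrix (Fin n) (Fin k) ℝ := Z * U with hVdef
  have hP : ridgeP Z γ = V * E * Vᵀ := by
    rw [ridgeP, hBinv, hUstar]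
    simp only [hVdef, Matrix.transpose_mul, Matrix.mul_assoc]
  have hVtV : Vᵀ * V = Matrix.diagonal lam := by
    have h2 : Vᵀ * V = star U * (Zᵀ * Z) * U := by
      rw [hUstar]
      simp only [hVdef, Matrix.transpose_mul, Matrix.mul_assoc]
    rw [h2, hdiagA]
  set P : Matrix (Fin n) (Fin n) ℝ := ridgeP Z γ with hPdef
  have hPentry : ∀ a b, P a b = ∑ i, V a i * (lam i + γ)⁻¹ * V b i := by
    intro a b
    rw [hP, Matrix.mul_apply]
    apply Finset.sum_congr rfl
    intro i _
    rw [Matrix.mul_diagonal, Matrix.transpose_apply]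
  have hPsymm : ∀ a b, P a b = P b a := by
    intro a b
    rw [hPentry, hPentry]
    apply Finset.sum_congr rfl
    intro i _; ring
  set c : Fin k → ℝ := fun i => (lam i + γ)⁻¹ * (lam i * (lam i + γ)⁻¹) with hcdef
  have hPP : P * P = V * Matrix.diagonal c * Vᵀ := by
    rw [hP]
    simp only [Matrix.mul_assoc]
    rw [← Matrix.mul_assoc Vᵀ V, hVtV,
      ← Matrix.mul_assoc (Matrix.diagonal lam) E, hEdef, Matrix.diagonal_mul_diagonal,
      ← Matrix.mul_assoc (Matrix.diagonal fun i => (lam i + γ)⁻¹),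
      Matrix.diagonal_mul_diagonal]
  set w : Fin n → ℝ := fun j => ∑ l, (P j l) ^ 2 with hwdef
  have hw_eq : ∀ j, w j = ∑ i, V j i * c i * V j i := by
    intro j
    have h1 : w j = (P * P) j j := by
      rw [Matrix.mul_apply, hwdef]
      apply Finset.sum_congr rfl
      intro l _
      rw [sq, hPsymm j l]
    rw [h1, hPP, Matrix.mul_apply]
    apply Finset.sum_congr rfl
    intro i _
    rw [Matrix.mul_diagonal, Matrix.transpose_apply]
  have hratio : ∀ i, lam i * (lam i + γ)⁻¹ ≤ 1 := by
    intro i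
    rw [← div_eq_mul_inv]
    exact div_le_one_of_le₀ (by linarith) (le_of_lt (hpos i))
  have hc_le : ∀ i, c i ≤ (lam i + γ)⁻¹ := by
    intro i
    have h1 : (lam i + γ)⁻¹ * (lam i * (lam i + γ)⁻¹) ≤ (lam i + γ)⁻¹ * 1 :=
      mul_le_mul_of_nonneg_left (hratio i) (inv_nonneg.2 (hpos i).le)
    simpa [hcdef] using h1
  have hc0 : ∀ i, 0 ≤ c i := by
    intro i
    have := hpos i
    have := hlam0 i
    positivity
  have hw_le_p : ∀ j, w j ≤ P j j := by
    intro j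
    rw [hw_eq, hPentry]
    apply Finset.sum_le_sum
    intro i _
    nlinarith [mul_self_nonneg (V j i), hc_le i]
  have hw0 : ∀ j, 0 ≤ w j := by
    intro j
    rw [hwdef]
    exact Finset.sum_nonneg fun l _ => sq_nonneg _
  have hp2w : ∀ j, (P j j) ^ 2 ≤ w j := by
    intro j
    exact Finset.single_le_sum (f := fun l => (P j l) ^ 2)
      (fun l _ => sq_nonneg _) (Finset.mem_univ j)
  have hw1 : ∀ j, w j ≤ 1 := by
    intro j
    have h1 := hp2w j
    have h2 := hw_le_p j
    nlinarith [hw0 j]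
  -- trace computation
  have hcol : ∀ i, ∑ j, V j i * V j i = lam i := by
    intro i
    have h1 : (Vᵀ * V) i i = lam i := by rw [hVtV, Matrix.diagonal_apply_eq]
    rw [Matrix.mul_apply] at h1
    simpa [Matrix.transpose_apply] using h1
  have htr : ∑ j, w j = ∑ i, lam i * c i := by
    rw [show ∑ j, w j = ∑ j, ∑ i, V j i * c i * V j i from
      Finset.sum_congr rfl fun j _ => hw_eq j]
    rw [Finset.sum_comm]
    apply Finset.sum_congr rfl
    intro i _
    rw [← hcol i, Finset.sum_mul]
    apply Finset.sum_congr rfl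
    intro j _; ring
  have hbound : ∀ i, lam i * c i ≤ if lam i ≠ 0 then (1:ℝ) else 0 := by
    intro i
    by_cases h : lam i = 0
    · simp [h, hcdef]
    · simp only [h, if_pos, ne_eq, not_false_eq_true, if_true]
      have h1 := hratio i
      have h2 : 0 ≤ lam i * (lam i + γ)⁻¹ := by
        have := hpos i; have := hlam0 i; positivity
      calc lam i * c i = (lam i * (lam i + γ)⁻¹) * (lam i * (lam i + γ)⁻¹) := by
            rw [hcdef]; ring
        _ ≤ 1 := mul_le_one₀ h1 h2 h1
  have hsum_if : ∑ i, (if lam i ≠ 0 then (1:ℝ) else 0)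
      = ((Finset.univ.filter fun i => lam i ≠ 0).card : ℝ) := by
    rw [Finset.sum_boole]
  have hrank : ((Finset.univ.filter fun i => lam i ≠ 0).card : ℝ) = (Z.rank : ℝ) := by
    have h1 : (Zᵀ * Z).rank = Fintype.card {i // lam i ≠ 0} := hA.rank_eq_card_non_zero_eigs
    rw [Matrix.rank_transpose_mul_self] at h1
    rw [Fintype.card_subtype] at h1
    rw [← h1]
  -- the triple sum over univ
  have huniv : ∑ t : Fin n × Fin n × Fin n, (P t.1 t.2.1) ^ 2 * (P t.2.1 t.2.2) ^ 2
      = ∑ j, (w j) ^ 2 := by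
    simp only [Fintype.sum_prod_type]
    have h1 : ∀ i j : Fin n, ∑ l, (P i j) ^ 2 * (P j l) ^ 2 = (P i j) ^ 2 * w j := by
      intro i j
      rw [hwdef, Finset.mul_sum]
    simp only [h1]
    rw [Finset.sum_comm]
    apply Finset.sum_congr rfl
    intro j _
    have h2 : ∑ i, (P i j) ^ 2 * w j = (∑ i, (P i j) ^ 2) * w j := by
      rw [Finset.sum_mul]
    rw [h2]
    have h3 : ∑ i, (P i j) ^ 2 = w j := by
      rw [hwdef]
      apply Finset.sum_congr rfl
      intro i _
      rw [hPsymm i j]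
    rw [h3, sq]
  calc ∑ t ∈ I₃, (P t.1 t.2.1) ^ 2 * (P t.2.1 t.2.2) ^ 2
      ≤ ∑ t : Fin n × Fin n × Fin n, (P t.1 t.2.1) ^ 2 * (P t.2.1 t.2.2) ^ 2 :=
        Finset.sum_le_sum_of_subset_of_nonneg (Finset.subset_univ _)
          (fun t _ _ => by positivity)
    _ = ∑ j, (w j) ^ 2 := huniv
    _ ≤ ∑ j, w j := Finset.sum_le_sum fun j _ => by nlinarith [hw0 j, hw1 j]
    _ = ∑ i, lam i * c i := htr
    _ ≤ ∑ i, (if lam i ≠ 0 then (1:ℝ) else 0) := Finset.sum_le_sum fun i _ => hbound i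
    _ = ((Finset.univ.filter fun i => lam i ≠ 0).card : ℝ) := hsum_if
    _ = (Z.rank : ℝ) := hrank
end

section
/- There exists a universal constant C > 0 (independent of n, k, Z and γ) such that for every n ≥ 4, every real n×k matrix Z of rank r > 0 and every admissible γ, the four-index sum over strictly increasing indices satisfies |∑_{1 ≤ i < j < l < m ≤ n} P^γ_{il} P^γ_{jl} P^γ_{im} P^γ_{jm}| ≤ C·r. -/
open Matrix Finset

/-- pair splitting identity -/
lemma halfsum {n : ℕ} (f : Fin n → ℝ) :
    ∑ l : Fin n, ∑ m : Fin n, (if l < m then f l * f m else 0)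
      = ((∑ l : Fin n, f l)^2 - ∑ l : Fin n, (f l)^2) / 2 := by
  have key : (∑ l : Fin n, f l)^2
      = (∑ l : Fin n, ∑ m : Fin n, (if l < m then f l * f m else 0))
        + (∑ l : Fin n, ∑ m : Fin n, (if m < l then f l * f m else 0))
        + ∑ l : Fin n, (f l)^2 := by
    rw [sq, Finset.sum_mul_sum]
    rw [← Finset.sum_add_distrib, ← Finset.sum_add_distrib]
    refine Finset.sum_congr rfl fun l _ => ?_
    rw [← Finset.sum_add_distrib]
    have : (f l)^2 = ∑ m : Fin n, (if l = m then f l * f m else 0) := by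
      rw [Finset.sum_ite_eq]
      simp [sq]
    rw [this, ← Finset.sum_add_distrib]
    refine Finset.sum_congr rfl fun m _ => ?_
    rcases lt_trichotomy l m with h | h | h
    · simp [h, h.ne, asymm h]
    · simp [h, lt_irrefl]
    · simp [h, h.ne', asymm h]
  have comm : (∑ l : Fin n, ∑ m : Fin n, (if m < l then f l * f m else 0))
      = ∑ l : Fin n, ∑ m : Fin n, (if l < m then f l * f m else 0) := by
    rw [Finset.sum_comm]
    exact Finset.sum_congr rfl fun l _ => Finset.sum_congr rfl fun m _ => by
      by_cases h : l < m <;> simp [h, mul_comm]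
  rw [comm] at key
  linarith

lemma sumpairs {n : ℕ} (g : Fin n → ℝ) (j : Fin n) :
    ∑ l : Fin n, ∑ m : Fin n, (if j < l ∧ l < m then g l * g m else 0)
      = ((∑ l : Fin n, if j < l then g l else 0)^2
          - ∑ l : Fin n, (if j < l then (g l)^2 else 0)) / 2 := by
  have h1 : ∑ l : Fin n, ∑ m : Fin n, (if j < l ∧ l < m then g l * g m else 0)
      = ∑ l : Fin n, ∑ m : Fin n,
          (if l < m then (if j < l then g l else 0) * (if j < m then g m else 0) else 0) := by
    refine Finset.sum_congr rfl fun l _ => Finset.sum_congr rfl fun m _ => ?_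
    by_cases h2 : l < m
    · by_cases h1 : j < l
      · simp [h1, h2, h1.trans h2]
      · simp [h1, h2]
    · simp [h2]
  rw [h1, halfsum (fun l => if j < l then g l else 0)]
  congr 1
  congr 1
  refine Finset.sum_congr rfl fun l _ => ?_
  by_cases h : j < l <;> simp [h]

variable {n k : ℕ}

lemma ridge_B_posDef (Z : Matrix (Fin n) (Fin k) ℝ) {γ : ℝ} (hγ : 0 ≤ γ)
    (hγ' : Z.rank < k → 0 < γ) :
    (Zᵀ * Z + γ • (1 : Matrix (Fin k) (Fin k) ℝ)).PosDef := by
  have hZtZ : (Zᵀ * Z).PosSemidef := by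
    have := Matrix.posSemidef_conjTranspose_mul_self Z
    rwa [Matrix.conjTranspose_eq_transpose_of_trivial] at this
  rcases lt_or_eq_of_le hγ with hpos | hzero
  · refine Matrix.PosDef.posSemidef_add hZtZ (Matrix.PosDef.of_dotProduct_mulVec_pos ?_ fun x hx => ?_)
    · rw [Matrix.IsHermitian, Matrix.conjTranspose_smul, Matrix.conjTranspose_one]
      simp
    · have : (γ • (1 : Matrix (Fin k) (Fin k) ℝ)) *ᵥ x = γ • x := by
        rw [Matrix.smul_mulVec, Matrix.one_mulVec]
      rw [this]
      simp only [dotProduct_smul, star_trivial, smul_eq_mul]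
      have hx' : 0 < dotProduct x x := by
        have := dotProduct_star_self_pos_iff (v := x) |>.mpr hx
        simpa using this
      exact mul_pos hpos hx'
  · -- γ = 0, so rank Z = k
    have hrk : Z.rank = k := by
      refine le_antisymm (Matrix.rank_le_width Z) ?_
      by_contra h
      exact absurd (hγ' (lt_of_not_ge h)) (by rw [← hzero]; exact lt_irrefl 0)
    have hker : LinearMap.ker Z.mulVecLin = ⊥ := by
      have h1 := LinearMap.finrank_range_add_finrank_ker Z.mulVecLin
      have h2 : Module.finrank ℝ (LinearMap.range Z.mulVecLin) = k := hrk
      rw [h2] at h1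
      have h3 : Module.finrank ℝ (Fin k → ℝ) = k := by simp
      rw [h3] at h1
      have : Module.finrank ℝ (LinearMap.ker Z.mulVecLin) = 0 := by omega
      exact Submodule.finrank_eq_zero.mp this
    have hinj : ∀ x : Fin k → ℝ, x ≠ 0 → Z *ᵥ x ≠ 0 := by
      intro x hx hZx
      exact hx (LinearMap.ker_eq_bot.mp hker (by simpa [Matrix.mulVecLin_apply] using hZx))
    rw [← hzero]
    refine Matrix.PosDef.of_dotProduct_mulVec_pos ?_ ?_
    · simpa using hZtZ.isHermitian
    · intro x hx
      have : dotProduct (star x) ((Zᵀ * Z + (0:ℝ) • 1) *ᵥ x)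
          = dotProduct (Z *ᵥ x) (Z *ᵥ x) := by
        simp only [zero_smul, add_zero, star_trivial]
        rw [← Matrix.mulVec_mulVec, Matrix.dotProduct_mulVec, Matrix.vecMul_transpose]
      rw [this]
      have := dotProduct_star_self_pos_iff (v := Z *ᵥ x) |>.mpr (hinj x hx)
      simpa using this

section facts
variable (Z : Matrix (Fin n) (Fin k) ℝ) {γ : ℝ} (hγ : 0 ≤ γ) (hγ' : Z.rank < k → 0 < γ)
include hγ hγ'

lemma ridgeP_posSemidef : (ridgeP Z γ).PosSemidef := by
  have hB := ridge_B_posDef Z hγ hγ'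
  have h := Matrix.PosSemidef.mul_mul_conjTranspose_same hB.inv.posSemidef Z
  rwa [Matrix.conjTranspose_eq_transpose_of_trivial] at h

lemma ridgeP_symm : ∀ i j, ridgeP Z γ i j = ridgeP Z γ j i := by
  intro i j
  have h : (ridgeP Z γ)ᵀ = ridgeP Z γ := by
    rw [← Matrix.conjTranspose_eq_transpose_of_trivial]
    exact (ridgeP_posSemidef Z hγ hγ').isHermitian
  calc ridgeP Z γ i j = (ridgeP Z γ)ᵀ j i := rfl
    _ = ridgeP Z γ j i := by rw [h]

lemma ridgeP_sub_sq :
    ridgeP Z γ - ridgeP Z γ * ridgeP Z γ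
      = γ • ((Z * (Zᵀ * Z + γ • (1 : Matrix (Fin k) (Fin k) ℝ))⁻¹)
            * (Z * (Zᵀ * Z + γ • (1 : Matrix (Fin k) (Fin k) ℝ))⁻¹)ᵀ) := by
  set B := Zᵀ * Z + γ • (1 : Matrix (Fin k) (Fin k) ℝ) with hBdef
  have hB := ridge_B_posDef Z hγ hγ'
  have hdet : IsUnit B.det := (Matrix.isUnit_iff_isUnit_det _).mp hB.isUnit
  have hBiB : B⁻¹ * B = 1 := Matrix.nonsing_inv_mul _ hdet
  have hBiT : B⁻¹ᵀ = B⁻¹ := by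
    rw [← Matrix.conjTranspose_eq_transpose_of_trivial]
    exact hB.inv.isHermitian
  have hZtZ : Zᵀ * Z = B - γ • 1 := by rw [hBdef, add_sub_cancel_right]
  have expand : ridgeP Z γ * ridgeP Z γ
      = ridgeP Z γ - γ • (Z * B⁻¹ * (B⁻¹ * Zᵀ)) := by
    have : ridgeP Z γ * ridgeP Z γ = Z * B⁻¹ * (Zᵀ * Z) * (B⁻¹ * Zᵀ) := by
      simp only [ridgeP, ← hBdef, Matrix.mul_assoc]
    rw [this, hZtZ]
    simp only [Matrix.mul_sub, Matrix.sub_mul, Matrix.mul_smul, Matrix.smul_mul]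
    rw [Matrix.mul_assoc (Z * B⁻¹) B (B⁻¹ * Zᵀ), ← Matrix.mul_assoc B B⁻¹ Zᵀ,
      Matrix.mul_nonsing_inv _ hdet, Matrix.one_mul]
    simp only [ridgeP, ← hBdef, Matrix.mul_assoc, Matrix.one_mul]
  rw [expand]
  rw [Matrix.transpose_mul, hBiT]
  rw [Matrix.mul_assoc]
  abel
end facts

section facts2
variable (Z : Matrix (Fin n) (Fin k) ℝ) {γ : ℝ} (hγ : 0 ≤ γ) (hγ' : Z.rank < k → 0 < γ)
include hγ hγ'

lemma ridgeP_quad_le : ∀ x : Fin n → ℝ,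
    dotProduct x ((ridgeP Z γ * ridgeP Z γ) *ᵥ x)
      ≤ dotProduct x (ridgeP Z γ *ᵥ x) := by
  intro x
  set N := Z * (Zᵀ * Z + γ • (1 : Matrix (Fin k) (Fin k) ℝ))⁻¹ with hN
  have hid := ridgeP_sub_sq Z hγ hγ'
  have h1 : dotProduct x (ridgeP Z γ *ᵥ x)
      - dotProduct x ((ridgeP Z γ * ridgeP Z γ) *ᵥ x)
      = γ * dotProduct (Nᵀ *ᵥ x) (Nᵀ *ᵥ x) := by
    rw [← dotProduct_sub, ← Matrix.sub_mulVec, hid]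
    rw [Matrix.smul_mulVec, dotProduct_smul, smul_eq_mul]
    congr 1
    rw [← Matrix.mulVec_mulVec, Matrix.dotProduct_mulVec, Matrix.mulVec_transpose]
  have h2 : 0 ≤ dotProduct (Nᵀ *ᵥ x) (Nᵀ *ᵥ x) := by
    have := dotProduct_star_self_nonneg (Nᵀ *ᵥ x)
    simpa using this
  nlinarith [mul_nonneg hγ h2]

lemma ridgeP_col_sq_le : ∀ j : Fin n,
    ∑ l : Fin n, (ridgeP Z γ l j)^2 ≤ ridgeP Z γ j j := by
  intro j
  have h := ridgeP_quad_le Z hγ hγ' (Pi.single j 1)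
  have c1 : dotProduct (Pi.single j (1:ℝ)) (ridgeP Z γ *ᵥ Pi.single j 1)
      = ridgeP Z γ j j := by
    rw [Matrix.mulVec_single]
    simp [single_dotProduct]
  have c2 : dotProduct (Pi.single j (1:ℝ)) ((ridgeP Z γ * ridgeP Z γ) *ᵥ Pi.single j 1)
      = ∑ l : Fin n, (ridgeP Z γ l j)^2 := by
    rw [Matrix.mulVec_single]
    simp only [MulOpposite.op_one, one_smul]
    rw [single_dotProduct]
    rw [one_mul, Matrix.col_apply, Matrix.mul_apply]
    refine Finset.sum_congr rfl fun l _ => ?_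
    rw [ridgeP_symm Z hγ hγ' j l, sq]
  rw [c1, c2] at h
  exact h

lemma ridgeP_contract : ∀ x : Fin n → ℝ,
    ∑ i : Fin n, ((ridgeP Z γ *ᵥ x) i)^2 ≤ ∑ i : Fin n, (x i)^2 := by
  intro x
  set y := ridgeP Z γ *ᵥ x with hy
  have hPt : (ridgeP Z γ)ᵀ = ridgeP Z γ := by
    rw [← Matrix.conjTranspose_eq_transpose_of_trivial]
    exact (ridgeP_posSemidef Z hγ hγ').isHermitian
  have h1 : dotProduct x ((ridgeP Z γ * ridgeP Z γ) *ᵥ x)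
      = dotProduct y y := by
    rw [← Matrix.mulVec_mulVec, Matrix.dotProduct_mulVec, ← hy]
    congr 1
    rw [← Matrix.mulVec_transpose, hPt, ← hy]
  have h2 : dotProduct y y ≤ dotProduct x y := by
    rw [← h1]; exact ridgeP_quad_le Z hγ hγ' x
  have hyy : dotProduct y y = ∑ i : Fin n, (y i)^2 := by
    simp [dotProduct, sq]
  have hxy : dotProduct x y = ∑ i : Fin n, x i * y i := rfl
  have hCS : (∑ i : Fin n, x i * y i)^2
      ≤ (∑ i : Fin n, (x i)^2) * ∑ i : Fin n, (y i)^2 :=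
    Finset.sum_mul_sq_le_sq_mul_sq _ _ _
  set a := ∑ i : Fin n, (y i)^2 with ha
  set b := ∑ i : Fin n, (x i)^2 with hb
  have ha0 : 0 ≤ a := Finset.sum_nonneg fun i _ => sq_nonneg _
  have hb0 : 0 ≤ b := Finset.sum_nonneg fun i _ => sq_nonneg _
  have h3 : a ≤ ∑ i : Fin n, x i * y i := by rw [← hxy, ← hyy]; exact h2
  rcases eq_or_lt_of_le ha0 with h | h
  · linarith
  · nlinarith
end facts2

section facts3
variable (Z : Matrix (Fin n) (Fin k) ℝ) {γ : ℝ} (hγ : 0 ≤ γ) (hγ' : Z.rank < k → 0 < γ)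
include hγ hγ'

lemma ridgeP_trace_le : ∑ j : Fin n, ridgeP Z γ j j ≤ (Z.rank : ℝ) := by
  have hPsd := ridgeP_posSemidef Z hγ hγ'
  have hH : (ridgeP Z γ).IsHermitian := hPsd.isHermitian
  -- eigenvalues are nonneg
  have heig0 : ∀ i, 0 ≤ hH.eigenvalues i := fun i => hPsd.eigenvalues_nonneg i
  -- eigenvalues are ≤ 1
  have heig1 : ∀ i, hH.eigenvalues i ≤ 1 := by
    intro i
    set μ := hH.eigenvalues i with hμ
    have hv := hH.mulVec_eigenvectorBasis i
    set v : Fin n → ℝ := ⇑(hH.eigenvectorBasis i) with hvdef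
    have hv0 : v ≠ 0 := by
      intro h
      apply hH.eigenvectorBasis.orthonormal.ne_zero i
      ext l
      exact congrFun h l
    have hsum : 0 < ∑ l : Fin n, (v l)^2 := by
      obtain ⟨l, hl⟩ := Function.ne_iff.mp hv0
      refine Finset.sum_pos' (fun m _ => sq_nonneg _) ⟨l, Finset.mem_univ l, ?_⟩
      have : v l ≠ 0 := hl
      positivity
    have hkey := ridgeP_contract Z hγ hγ' v
    rw [hv] at hkey
    have : ∑ l : Fin n, ((μ • v) l)^2 = μ^2 * ∑ l : Fin n, (v l)^2 := by
      rw [Finset.mul_sum]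
      refine Finset.sum_congr rfl fun l _ => ?_
      simp [mul_pow]
    rw [this] at hkey
    have hμ2 : μ^2 ≤ 1 := by
      by_contra hcon
      push_neg at hcon
      nlinarith
    nlinarith [heig0 i]
  -- trace = sum of eigenvalues
  have htr : ∑ j : Fin n, ridgeP Z γ j j = ∑ i : Fin n, hH.eigenvalues i := by
    have hst := hH.spectral_theorem
    have : (ridgeP Z γ).trace
        = (Matrix.diagonal (RCLike.ofReal ∘ hH.eigenvalues) : Matrix (Fin n) (Fin n) ℝ).trace := by
      conv_lhs => rw [hst]
      rw [Unitary.conjStarAlgAut_apply, Matrix.trace_mul_cycle]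
      rw [Unitary.coe_star_mul_self, Matrix.one_mul]
    rw [Matrix.trace_diagonal] at this
    simp only [Function.comp, RCLike.ofReal_real_eq_id, id_eq] at this
    rw [← this]
    simp [Matrix.trace, Matrix.diag]
  rw [htr]
  -- sum of eigenvalues ≤ card of nonzero eigenvalues = rank P ≤ rank Z
  have hstep : ∑ i : Fin n, hH.eigenvalues i
      ≤ ∑ i : Fin n, (if hH.eigenvalues i ≠ 0 then (1:ℝ) else 0) := by
    refine Finset.sum_le_sum fun i _ => ?_
    by_cases h : hH.eigenvalues i ≠ 0
    · simpa [h] using heig1 i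
    · push_neg at h
      simp [h]
  have hcardsum : ∑ i : Fin n, (if hH.eigenvalues i ≠ 0 then (1:ℝ) else 0)
      = ((Finset.univ.filter fun i => hH.eigenvalues i ≠ 0).card : ℝ) := by
    rw [Finset.sum_boole]
  have hrankP : (ridgeP Z γ).rank ≤ Z.rank := by
    have h1 : ridgeP Z γ = (Z * (Zᵀ * Z + γ • (1 : Matrix (Fin k) (Fin k) ℝ))⁻¹) * Zᵀ := rfl
    rw [h1]
    exact (Matrix.rank_mul_le_left _ _).trans (Matrix.rank_mul_le_left _ _)
  have hcard : (ridgeP Z γ).rank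
      = (Finset.univ.filter fun i => hH.eigenvalues i ≠ 0).card := by
    rw [hH.rank_eq_card_non_zero_eigs, Fintype.card_subtype]
  calc ∑ i : Fin n, hH.eigenvalues i
      ≤ ((Finset.univ.filter fun i => hH.eigenvalues i ≠ 0).card : ℝ) := by
        rw [← hcardsum]; exact hstep
    _ = ((ridgeP Z γ).rank : ℝ) := by rw [hcard]
    _ ≤ (Z.rank : ℝ) := by exact_mod_cast hrankP

end facts3

/-- There is a universal constant `C > 0` such that for every `n ≥ 4`, every real `n×k`
matrix `Z` of positive rank `r` and every admissible ridge penalty `γ`,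
`|∑_{i<j<l<m} P^γ_{il} P^γ_{jl} P^γ_{im} P^γ_{jm}| ≤ C·r`. -/
theorem ridgeP_quadruple_sum_le :
    ∃ C : ℝ, 0 < C ∧
      ∀ (n k : ℕ), 4 ≤ n → 0 < k →
        ∀ (Z : Matrix (Fin n) (Fin k) ℝ), 0 < Z.rank →
          ∀ γ : ℝ, 0 ≤ γ → (Z.rank < k → 0 < γ) →
            |∑ i : Fin n, ∑ j : Fin n, ∑ l : Fin n, ∑ m : Fin n,
                if i < j ∧ j < l ∧ l < m then
                  ridgeP Z γ i l * ridgeP Z γ j l * ridgeP Z γ i m * ridgeP Z γ j m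
                else 0| ≤ C * (Z.rank : ℝ) := by
  refine ⟨1, one_pos, ?_⟩
  intro n k hn hk Z hrank γ hγ hγ'
  set P : Matrix (Fin n) (Fin n) ℝ := ridgeP Z γ with hP
  set T : Fin n → Fin n → ℝ :=
    fun i j => ∑ l : Fin n, if j < l then P i l * P j l else 0 with hT
  set W : Fin n → Fin n → ℝ :=
    fun i j => ∑ l : Fin n, if j < l then (P i l * P j l)^2 else 0 with hW
  have hW0 : ∀ i j, 0 ≤ W i j := fun i j =>
    Finset.sum_nonneg fun l _ => by positivity
  -- Step 1 : collapse the two inner sums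
  have step1 : ∀ i j : Fin n,
      (∑ l : Fin n, ∑ m : Fin n,
        if i < j ∧ j < l ∧ l < m then P i l * P j l * P i m * P j m else 0)
      = if i < j then ((T i j)^2 - W i j)/2 else 0 := by
    intro i j
    by_cases h : i < j
    · rw [if_pos h]
      have e : (∑ l : Fin n, ∑ m : Fin n,
          if i < j ∧ j < l ∧ l < m then P i l * P j l * P i m * P j m else 0)
          = ∑ l : Fin n, ∑ m : Fin n,
            (if j < l ∧ l < m then (P i l * P j l) * (P i m * P j m) else 0) := by
        refine Finset.sum_congr rfl fun l _ => Finset.sum_congr rfl fun m _ => ?_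
        by_cases h2 : j < l ∧ l < m
        · rw [if_pos ⟨h, h2⟩, if_pos h2]; ring
        · rw [if_neg (fun hc => h2 hc.2), if_neg h2]
      rw [e, sumpairs (fun l => P i l * P j l) j]
    · rw [if_neg h]
      refine Finset.sum_eq_zero fun l _ => Finset.sum_eq_zero fun m _ => ?_
      rw [if_neg (fun hc => h hc.1)]
  -- rewrite the whole sum
  have hrw : (∑ i : Fin n, ∑ j : Fin n, ∑ l : Fin n, ∑ m : Fin n,
        if i < j ∧ j < l ∧ l < m then P i l * P j l * P i m * P j m else 0)
      = ∑ i : Fin n, ∑ j : Fin n, (if i < j then ((T i j)^2 - W i j)/2 else 0) :=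
    Finset.sum_congr rfl fun i _ => Finset.sum_congr rfl fun j _ => step1 i j
  rw [hrw]
  -- bound each term by ((T i j)^2 + W i j)/2
  have habs : |∑ i : Fin n, ∑ j : Fin n, (if i < j then ((T i j)^2 - W i j)/2 else 0)|
      ≤ ∑ i : Fin n, ∑ j : Fin n, ((T i j)^2 + W i j)/2 := by
    refine (Finset.abs_sum_le_sum_abs _ _).trans (Finset.sum_le_sum fun i _ => ?_)
    refine (Finset.abs_sum_le_sum_abs _ _).trans (Finset.sum_le_sum fun j _ => ?_)
    by_cases h : i < j
    · rw [if_pos h, abs_div, abs_of_pos (by norm_num : (0:ℝ) < 2)]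
      have := hW0 i j
      have h2 : |(T i j)^2 - W i j| ≤ (T i j)^2 + W i j := by
        rw [abs_le]; constructor <;> nlinarith [sq_nonneg (T i j)]
      linarith
    · rw [if_neg h, abs_zero]
      have := hW0 i j
      have := sq_nonneg (T i j)
      positivity
  refine habs.trans ?_
  -- the two trace bounds
  set trP : ℝ := ∑ j : Fin n, P j j with htrP
  have hq : ∀ l : Fin n, ∑ i : Fin n, (P i l)^2 ≤ P l l :=
    ridgeP_col_sq_le Z hγ hγ'
  have boundW : ∑ i : Fin n, ∑ j : Fin n, W i j ≤ trP := by
    have h1 : ∑ i : Fin n, ∑ j : Fin n, W i j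
        ≤ ∑ i : Fin n, ∑ j : Fin n, ∑ l : Fin n, (P i l)^2 * (P j l)^2 := by
      refine Finset.sum_le_sum fun i _ => Finset.sum_le_sum fun j _ => ?_
      refine Finset.sum_le_sum fun l _ => ?_
      rw [← mul_pow]
      by_cases h : j < l
      · rw [if_pos h]
      · rw [if_neg h]; positivity
    have h2 : ∑ i : Fin n, ∑ j : Fin n, ∑ l : Fin n, (P i l)^2 * (P j l)^2
        = ∑ l : Fin n, (∑ i : Fin n, (P i l)^2) * (∑ j : Fin n, (P j l)^2) := by
      calc ∑ i : Fin n, ∑ j : Fin n, ∑ l : Fin n, (P i l)^2 * (P j l)^2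
          = ∑ i : Fin n, ∑ l : Fin n, ∑ j : Fin n, (P i l)^2 * (P j l)^2 :=
            Finset.sum_congr rfl fun i _ => Finset.sum_comm
        _ = ∑ l : Fin n, ∑ i : Fin n, ∑ j : Fin n, (P i l)^2 * (P j l)^2 :=
            Finset.sum_comm
        _ = ∑ l : Fin n, (∑ i : Fin n, (P i l)^2) * (∑ j : Fin n, (P j l)^2) :=
            Finset.sum_congr rfl fun l _ => (Finset.sum_mul_sum _ _ _ _).symm
    have h3 : ∑ l : Fin n, (∑ i : Fin n, (P i l)^2) * (∑ j : Fin n, (P j l)^2)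
        ≤ trP := by
      refine Finset.sum_le_sum fun l _ => ?_
      set q := ∑ i : Fin n, (P i l)^2 with hqdef
      have hq1 : q ≤ P l l := hq l
      have hq0 : 0 ≤ q := Finset.sum_nonneg fun i _ => sq_nonneg _
      have hq2 : (P l l)^2 ≤ q :=
        Finset.single_le_sum (f := fun i => (P i l)^2)
          (fun i _ => sq_nonneg _) (Finset.mem_univ l)
      nlinarith
    calc ∑ i : Fin n, ∑ j : Fin n, W i j
        ≤ ∑ i : Fin n, ∑ j : Fin n, ∑ l : Fin n, (P i l)^2 * (P j l)^2 := h1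
      _ = _ := h2
      _ ≤ trP := h3
  have boundT : ∑ i : Fin n, ∑ j : Fin n, (T i j)^2 ≤ trP := by
    rw [Finset.sum_comm]
    refine Finset.sum_le_sum fun j _ => ?_
    set z : Fin n → ℝ := fun l => if j < l then P j l else 0 with hz
    have hTz : ∀ i, T i j = (P *ᵥ z) i := by
      intro i
      rw [hT]
      simp only
      refine Finset.sum_congr rfl fun l _ => ?_
      by_cases h : j < l <;> simp [hz, h, Matrix.mulVec, dotProduct]
    calc ∑ i : Fin n, (T i j)^2
        = ∑ i : Fin n, ((P *ᵥ z) i)^2 :=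
          Finset.sum_congr rfl fun i _ => by rw [hTz i]
      _ ≤ ∑ l : Fin n, (z l)^2 := ridgeP_contract Z hγ hγ' z
      _ ≤ ∑ l : Fin n, (P j l)^2 := by
          refine Finset.sum_le_sum fun l _ => ?_
          by_cases h : j < l
          · simp [hz, h]
          · have hzl : z l = 0 := if_neg h
            rw [hzl]
            simpa using sq_nonneg (P j l)
      _ = ∑ l : Fin n, (P l j)^2 :=
          Finset.sum_congr rfl fun l _ => by rw [show P j l = P l j from ridgeP_symm Z hγ hγ' j l]
      _ ≤ P j j := hq j
  have hsplit : ∑ i : Fin n, ∑ j : Fin n, ((T i j)^2 + W i j)/2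
      = ((∑ i : Fin n, ∑ j : Fin n, (T i j)^2)
          + (∑ i : Fin n, ∑ j : Fin n, W i j))/2 := by
    simp only [add_div, Finset.sum_add_distrib, Finset.sum_div]
  calc ∑ i : Fin n, ∑ j : Fin n, ((T i j)^2 + W i j)/2
      = ((∑ i : Fin n, ∑ j : Fin n, (T i j)^2)
          + (∑ i : Fin n, ∑ j : Fin n, W i j))/2 := hsplit
    _ ≤ (trP + trP)/2 := by linarith
    _ = trP := by ring
    _ ≤ (Z.rank : ℝ) := by rw [htrP]; exact ridgeP_trace_le Z hγ hγ'
    _ = 1 * (Z.rank : ℝ) := (one_mul _).symm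
end

section
/- Let γ₋ > 0 and let Γ := [0,∞) if rank(Z) = k and Γ := [γ₋,∞) if rank(Z) < k. If there exists γ ∈ Γ for which P^γ is not a diagonal matrix (equivalently, ∑_{i=1}^n ∑_{j≠i} (P^γ_{ij})² > 0), then the function f(γ) := ∑_{i=1}^n ∑_{j≠i} (P^γ_{ij})² attains its maximum on Γ, and the set of maximisers has a largest element γ* ∈ [0,∞). -/
open Matrix Finset Filter Topology

private lemma psd_transpose_mul_self {n k : ℕ} (Z : Matrix (Fin n) (Fin k) ℝ) :
    (Zᵀ * Z).PosSemidef := by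
  have := Matrix.posSemidef_conjTranspose_mul_self Z
  rwa [Z.conjTranspose_eq_transpose_of_trivial] at this

private lemma det_ridge_ne {n k : ℕ} (Z : Matrix (Fin n) (Fin k) ℝ) {γ : ℝ} (hγ : 0 < γ) :
    (Zᵀ * Z + γ • (1 : Matrix (Fin k) (Fin k) ℝ)).det ≠ 0 := by
  have pd : (γ • (1 : Matrix (Fin k) (Fin k) ℝ)).PosDef := by
    rw [Matrix.smul_one_eq_diagonal]
    exact Matrix.PosDef.diagonal fun _ => hγ
  exact (Matrix.PosDef.posSemidef_add (psd_transpose_mul_self Z) pd).det_pos.ne'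

private lemma det_fullrank_ne {n k : ℕ} (Z : Matrix (Fin n) (Fin k) ℝ) (hrank : Z.rank = k) :
    (Zᵀ * Z).det ≠ 0 := by
  have hA : (Zᵀ * Z).rank = k := by rw [Matrix.rank_transpose_mul_self]; exact hrank
  have hunit : IsUnit (Zᵀ * Z) := by
    rw [← Matrix.mulVec_surjective_iff_isUnit]
    have hrange : LinearMap.range (Zᵀ * Z).mulVecLin = ⊤ := by
      apply Submodule.eq_top_of_finrank_eq
      rw [Module.finrank_fin_fun]
      exact hA
    intro y
    obtain ⟨x, hx⟩ := LinearMap.range_eq_top.mp hrange y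
    exact ⟨x, hx⟩
  exact ((Matrix.isUnit_iff_isUnit_det _).mp hunit).ne_zero

/-- The off-diagonal squared-mass functional of `Z * A * Zᵀ` is continuous in `A`. -/
private lemma cont_offdiag {n k : ℕ} (Z : Matrix (Fin n) (Fin k) ℝ) :
    Continuous (fun A : Matrix (Fin k) (Fin k) ℝ =>
      ∑ i : Fin n, ∑ j ∈ Finset.univ.erase i, ((Z * A * Zᵀ) i j) ^ 2) := by
  refine continuous_finset_sum _ fun i _ => continuous_finset_sum _ fun j _ => ?_
  have h1 : Continuous (fun A : Matrix (Fin k) (Fin k) ℝ => Z * A * Zᵀ) :=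
    (continuous_const.matrix_mul continuous_id).matrix_mul continuous_const
  exact ((continuous_apply j).comp ((continuous_apply i).comp h1)).pow 2

private lemma contAt_inv_param {k : ℕ} {M : ℝ → Matrix (Fin k) (Fin k) ℝ}
    (hM : Continuous M) {t : ℝ} (h : (M t).det ≠ 0) :
    ContinuousAt (fun x => (M x)⁻¹) t := by
  have h1 : ContinuousAt Ring.inverse (M t).det := by
    rw [Ring.inverse_eq_inv']
    exact continuousAt_inv₀ h
  exact (continuousAt_matrix_inv _ h1).comp hM.continuousAt

private lemma psd_smul {k : ℕ} {A : Matrix (Fin k) (Fin k) ℝ} (hA : A.PosSemidef)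
    {t : ℝ} (ht : 0 ≤ t) : (t • A).PosSemidef := by
  refine ⟨?_, fun x => ?_⟩
  · unfold Matrix.IsHermitian
    rw [conjTranspose_smul, hA.1]
    simp
  · exact (hA.smul ht).2 x

/-- Let `Γ = [0, ∞)` if `rank(Z) = k` and `Γ = [γ₋, ∞)` otherwise. If for some `γ ∈ Γ`
the matrix `P^γ` is not diagonal (equivalently its off-diagonal squared mass is positive),
then `f(γ) = ∑_i ∑_{j ≠ i} (P^γ_{ij})²` attains its maximum on `Γ`, and the set of
maximisers has a largest element `γ* ∈ [0, ∞)`. -/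
theorem gammaStar_exists
    {n k : ℕ} (hn : 0 < n) (hk : 0 < k)
    (Z : Matrix (Fin n) (Fin k) ℝ) (hr : 0 < Z.rank)
    (γm : ℝ) (hγm : 0 < γm)
    (Γ : Set ℝ)
    (hΓ : Γ = if Z.rank = k then Set.Ici (0 : ℝ) else Set.Ici γm)
    (f : ℝ → ℝ)
    (hf : ∀ γ, f γ = ∑ i : Fin n, ∑ j ∈ Finset.univ.erase i, (ridgeP Z γ i j) ^ 2)
    (hnd : ∃ γ ∈ Γ, 0 < f γ) :
    ∃ γs ∈ Γ, 0 ≤ γs ∧ (∀ γ ∈ Γ, f γ ≤ f γs) ∧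
      (∀ γ' ∈ Γ, (∀ γ ∈ Γ, f γ ≤ f γ') → γ' ≤ γs) := by
  -- Uniform description of Γ
  obtain ⟨a, ha0, hΓa, hdet⟩ :
      ∃ a : ℝ, 0 ≤ a ∧ Γ = Set.Ici a ∧
        ∀ γ, a ≤ γ → (Zᵀ * Z + γ • (1 : Matrix (Fin k) (Fin k) ℝ)).det ≠ 0 := by
    by_cases hrk : Z.rank = k
    · refine ⟨0, le_refl _, by rw [hΓ, if_pos hrk], fun γ hγ => ?_⟩
      rcases hγ.lt_or_eq with h | h
      · exact det_ridge_ne Z h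
      · rw [← h, zero_smul, add_zero]
        exact det_fullrank_ne Z hrk
    · exact ⟨γm, hγm.le, by rw [hΓ, if_neg hrk],
        fun γ hγ => det_ridge_ne Z (lt_of_lt_of_le hγm hγ)⟩
  -- f rewritten
  have hfeq : f = fun x => ∑ i : Fin n, ∑ j ∈ Finset.univ.erase i,
      ((Z * (Zᵀ * Z + x • (1 : Matrix (Fin k) (Fin k) ℝ))⁻¹ * Zᵀ) i j) ^ 2 :=
    funext fun x => hf x
  have hMcont : Continuous (fun x : ℝ => Zᵀ * Z + x • (1 : Matrix (Fin k) (Fin k) ℝ)) :=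
    continuous_const.add (continuous_id.smul continuous_const)
  -- continuity of f on Γ
  have hfc : ∀ γ, a ≤ γ → ContinuousAt f γ := by
    intro γ hγ
    rw [hfeq]
    exact (cont_offdiag Z).continuousAt.comp
      ((contAt_inv_param hMcont (hdet γ hγ)).comp continuousAt_id |>.comp continuousAt_id)
      |>.congr (by filter_upwards with x; rfl)
  -- tendsto 0 at infinity
  have htt : Tendsto f atTop (𝓝 0) := by
    set N : ℝ → Matrix (Fin k) (Fin k) ℝ := fun t => t • (Zᵀ * Z) + 1 with hN
    set g : ℝ → ℝ := fun t => ∑ i : Fin n, ∑ j ∈ Finset.univ.erase i,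
      ((Z * (t • (N t)⁻¹) * Zᵀ) i j) ^ 2 with hg
    have hNdet : ∀ t, 0 ≤ t → (N t).det ≠ 0 := by
      intro t ht
      have : (N t).PosDef :=
        Matrix.PosDef.posSemidef_add (psd_smul (psd_transpose_mul_self Z) ht) Matrix.PosDef.one
      exact this.det_pos.ne'
    have hNcont : Continuous N := (continuous_id.smul continuous_const).add continuous_const
    have hGc : ContinuousAt (fun t => t • (N t)⁻¹) 0 :=
      continuousAt_id.smul (contAt_inv_param hNcont (hNdet 0 le_rfl))
    have hgc : ContinuousAt g 0 := (cont_offdiag Z).continuousAt.comp hGc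
    have hg0 : g 0 = 0 := by simp [hg]
    have hkey : ∀ γ : ℝ, 0 < γ → f γ = g γ⁻¹ := by
      intro γ hγ
      have hinveq : (Zᵀ * Z + γ • (1 : Matrix (Fin k) (Fin k) ℝ))⁻¹ = γ⁻¹ • (N γ⁻¹)⁻¹ := by
        apply Matrix.inv_eq_right_inv
        have hMeq : Zᵀ * Z + γ • (1 : Matrix (Fin k) (Fin k) ℝ) = γ • N γ⁻¹ := by
          rw [hN]
          simp only [smul_add, smul_smul, mul_inv_cancel₀ hγ.ne', one_smul]
        rw [hMeq, Matrix.smul_mul, Matrix.mul_smul, smul_smul, mul_inv_cancel₀ hγ.ne',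
          one_smul, Matrix.mul_nonsing_inv _
            (Ne.isUnit (hNdet γ⁻¹ (inv_nonneg.mpr hγ.le)))]
      rw [hfeq]
      simp only [hg, hinveq]
    have hev : f =ᶠ[atTop] fun γ => g γ⁻¹ := by
      filter_upwards [eventually_gt_atTop 0] with γ hγ
      exact hkey γ hγ
    have : Tendsto (fun γ => g γ⁻¹) atTop (𝓝 0) := by
      rw [← hg0]
      exact hgc.tendsto.comp tendsto_inv_atTop_zero
    exact this.congr' hev.symm
  -- pick γ₀ with f γ₀ > 0
  obtain ⟨γ₀, hγ₀Γ, hγ₀⟩ := hnd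
  have hγ₀a : a ≤ γ₀ := by rwa [hΓa] at hγ₀Γ
  have hevlt : f ⁻¹' Set.Iio (f γ₀) ∈ atTop := htt (Iio_mem_nhds hγ₀)
  obtain ⟨B, hB⟩ := eventually_atTop.mp hevlt
  set b : ℝ := max B γ₀ with hb
  have hγ₀b : γ₀ ≤ b := le_max_right _ _
  have hγ₀mem : γ₀ ∈ Set.Icc a b := ⟨hγ₀a, hγ₀b⟩
  have hcont : ContinuousOn f (Set.Icc a b) := fun x hx => (hfc x hx.1).continuousWithinAt
  obtain ⟨γmax, hγmaxmem, hγmaxmax⟩ :=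
    isCompact_Icc.exists_isMaxOn ⟨γ₀, hγ₀mem⟩ hcont
  have hbig : ∀ γ : ℝ, b < γ → f γ < f γ₀ := fun γ hγ =>
    hB γ ((le_max_left B γ₀).trans hγ.le)
  have hmax : ∀ γ ∈ Γ, f γ ≤ f γmax := by
    intro γ hγ
    rw [hΓa] at hγ
    by_cases hγb : γ ≤ b
    · exact hγmaxmax ⟨hγ, hγb⟩
    · exact ((hbig γ (lt_of_not_ge hγb)).trans_le (hγmaxmax hγ₀mem)).le
  -- the set of maximisers within the compact window
  set T : Set ℝ := Set.Icc a b ∩ f ⁻¹' Set.Ici (f γmax) with hT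
  have hTclosed : IsClosed T :=
    hcont.preimage_isClosed_of_isClosed isClosed_Icc isClosed_Ici
  have hTcomp : IsCompact T := isCompact_Icc.of_isClosed_subset hTclosed Set.inter_subset_left
  have hTne : T.Nonempty := ⟨γmax, hγmaxmem, Set.mem_preimage.mpr (Set.mem_Ici.mpr le_rfl)⟩
  have hγsT : sSup T ∈ T := hTcomp.sSup_mem hTne
  refine ⟨sSup T, ?_, ha0.trans hγsT.1.1, ?_, ?_⟩
  · rw [hΓa]; exact hγsT.1.1
  · intro γ hγ
    exact (hmax γ hγ).trans hγsT.2
  · intro γ' hγ'Γ hmax'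
    have h1 : f γ₀ ≤ f γ' := hmax' γ₀ hγ₀Γ
    have hγ'b : γ' ≤ b := by
      by_contra hc
      exact absurd h1 (not_le.mpr (hbig γ' (lt_of_not_ge hc)))
    have hγ'T : γ' ∈ T := by
      refine ⟨⟨?_, hγ'b⟩, hmax' γmax ?_⟩
      · rwa [hΓa] at hγ'Γ
      · rw [hΓa]; exact hγmaxmem.1
    exact le_csSup hTcomp.bddAbove hγ'T
end

section
/- The diagonal entries of the ridge-regularised projection matrix are nonincreasing in the penalty: for any admissible 0 ≤ γ₁ ≤ γ₂ and every h ∈ {1,…,n}, 0 ≤ P^{γ₂}_{hh} ≤ P^{γ₁}_{hh}; in particular, P^γ_{hh} ≤ P_{hh} for all γ ≥ 0 when ZᵀZ is invertible and P := Z(ZᵀZ)^{-1}Zᵀ. -/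
open Matrix Finset


variable {n k : ℕ}

lemma myPsdSmul {M : Matrix (Fin k) (Fin k) ℝ} (hM : M.PosSemidef) {c : ℝ} (hc : 0 ≤ c) :
    (c • M).PosSemidef := by
  refine Matrix.PosSemidef.of_dotProduct_mulVec_nonneg ?_ (fun x => ?_)
  · unfold Matrix.IsHermitian
    rw [conjTranspose_smul, hM.isHermitian]
    simp
  · have := hM.dotProduct_mulVec_nonneg x
    simp only [smul_mulVec, dotProduct_smul, smul_eq_mul] at *
    positivity

lemma myDiagNonneg {M : Matrix (Fin n) (Fin n) ℝ} (hM : M.PosSemidef) (h : Fin n) :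
    0 ≤ M h h := by
  simpa using hM.dotProduct_mulVec_nonneg (Pi.single h 1)

lemma myInjective (Z : Matrix (Fin n) (Fin k) ℝ) (hrank : Z.rank = k)
    {x : Fin k → ℝ} (hx : x ≠ 0) : Z *ᵥ x ≠ 0 := by
  intro h0
  have hrn := LinearMap.finrank_range_add_finrank_ker Z.mulVecLin
  rw [show Module.finrank ℝ (LinearMap.range Z.mulVecLin) = Z.rank from rfl, hrank,
    Module.finrank_pi] at hrn
  simp only [Fintype.card_fin] at hrn
  have hker : Module.finrank ℝ (LinearMap.ker Z.mulVecLin) = 0 := by omega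
  have : LinearMap.ker Z.mulVecLin = ⊥ := Submodule.finrank_eq_zero.mp hker
  have hmem : x ∈ LinearMap.ker Z.mulVecLin := by
    simpa [LinearMap.mem_ker, mulVecLin_apply] using h0
  rw [this, Submodule.mem_bot] at hmem
  exact hx hmem

lemma myPosDefZtZ (Z : Matrix (Fin n) (Fin k) ℝ) (hrank : Z.rank = k) :
    (Zᵀ * Z).PosDef := by
  have psd : (Zᵀ * Z).PosSemidef := by
    simpa [conjTranspose_eq_transpose_of_trivial] using posSemidef_conjTranspose_mul_self Z
  refine Matrix.PosDef.of_dotProduct_mulVec_pos psd.isHermitian (fun x hx => ?_)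
  have hZx : Z *ᵥ x ≠ 0 := myInjective Z hrank hx
  have : (star x) ⬝ᵥ ((Zᵀ * Z) *ᵥ x) = (Z *ᵥ x) ⬝ᵥ (Z *ᵥ x) := by
    rw [← mulVec_mulVec, dotProduct_mulVec, star_trivial, vecMul_transpose]
  rw [this]
  simpa using dotProduct_star_self_pos_iff.mpr hZx

lemma myPosDefA (Z : Matrix (Fin n) (Fin k) ℝ) {γ : ℝ} (hγ0 : 0 ≤ γ)
    (hγ : Z.rank < k → 0 < γ) :
    (Zᵀ * Z + γ • (1 : Matrix (Fin k) (Fin k) ℝ)).PosDef := by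
  have psd : (Zᵀ * Z).PosSemidef := by
    simpa [conjTranspose_eq_transpose_of_trivial] using posSemidef_conjTranspose_mul_self Z
  rcases hγ0.lt_or_eq with hpos | heq
  · refine Matrix.PosDef.posSemidef_add psd ?_
    rw [smul_one_eq_diagonal]
    exact posDef_diagonal_iff.mpr fun _ => hpos
  · have hrank : Z.rank = k := by
      by_contra hne
      have : Z.rank < k := lt_of_le_of_ne Z.rank_le_width hne
      linarith [hγ this]
    rw [← heq, zero_smul, add_zero]
    exact myPosDefZtZ Z hrank

lemma myKey {A₁ A₂ : Matrix (Fin k) (Fin k) ℝ} {δ : ℝ}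
    (hA₂ : A₂ = A₁ + δ • (1 : Matrix (Fin k) (Fin k) ℝ))
    (h1 : IsUnit A₁.det) (h2 : IsUnit A₂.det) :
    A₁⁻¹ - A₂⁻¹ = A₂⁻¹ * (δ • (1 : Matrix (Fin k) (Fin k) ℝ) + (δ * δ) • A₁⁻¹) * A₂⁻¹ := by
  have e1 : A₁ * A₁⁻¹ = 1 := Matrix.mul_nonsing_inv _ h1
  have e1' : A₁⁻¹ * A₁ = 1 := Matrix.nonsing_inv_mul _ h1
  have e2 : A₂ * A₂⁻¹ = 1 := Matrix.mul_nonsing_inv _ h2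
  have e2' : A₂⁻¹ * A₂ = 1 := Matrix.nonsing_inv_mul _ h2
  have E : A₂ * (A₁⁻¹ - A₂⁻¹) * A₂ = δ • (1 : Matrix (Fin k) (Fin k) ℝ) + (δ * δ) • A₁⁻¹ := by
    have expand : A₂ * (A₁⁻¹ - A₂⁻¹) * A₂ = A₂ * A₁⁻¹ * A₂ - A₂ := by
      rw [Matrix.mul_sub, Matrix.sub_mul, Matrix.mul_assoc A₂ A₂⁻¹, e2', Matrix.mul_one]
    rw [expand, hA₂]
    simp only [Matrix.add_mul, Matrix.mul_add, Matrix.smul_mul, Matrix.mul_smul,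
      e1, e1', Matrix.one_mul, Matrix.mul_one, smul_smul, one_mul]
    module
  have sandwich : A₂⁻¹ * (A₂ * (A₁⁻¹ - A₂⁻¹) * A₂) * A₂⁻¹ = A₁⁻¹ - A₂⁻¹ := by
    simp only [← Matrix.mul_assoc]
    rw [e2', Matrix.one_mul, Matrix.mul_assoc, e2, Matrix.mul_one]
  rw [← sandwich, E]


/-- The diagonal entries of the ridge-regularised projection matrix are nonnegative and
nonincreasing in the penalty: for admissible `0 ≤ γ₁ ≤ γ₂` and every `h`,
`0 ≤ P^{γ₂}_{hh} ≤ P^{γ₁}_{hh}`; in particular `P^γ_{hh} ≤ P_{hh}` for all `γ ≥ 0`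
when `ZᵀZ` is invertible and `P = Z(ZᵀZ)⁻¹Zᵀ`. -/
theorem ridgeP_diag_antitone
    {n k : ℕ} (hn : 0 < n) (hk : 0 < k)
    (Z : Matrix (Fin n) (Fin k) ℝ) (hr : 0 < Z.rank) :
    (∀ γ₁ γ₂ : ℝ, 0 ≤ γ₁ →
      (Z.rank < k → 0 < γ₁) → (Z.rank < k → 0 < γ₂) → γ₁ ≤ γ₂ →
      ∀ h : Fin n,
        0 ≤ ridgeP Z γ₂ h h ∧ ridgeP Z γ₂ h h ≤ ridgeP Z γ₁ h h) ∧
    (IsUnit (Zᵀ * Z).det →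
      ∀ γ : ℝ, 0 ≤ γ → ∀ h : Fin n,
        ridgeP Z γ h h ≤ (Z * (Zᵀ * Z)⁻¹ * Zᵀ) h h) := by
  have main : ∀ γ₁ γ₂ : ℝ, 0 ≤ γ₁ →
      (Z.rank < k → 0 < γ₁) → (Z.rank < k → 0 < γ₂) → γ₁ ≤ γ₂ →
      ∀ h : Fin n,
        0 ≤ ridgeP Z γ₂ h h ∧ ridgeP Z γ₂ h h ≤ ridgeP Z γ₁ h h := by
    intro γ₁ γ₂ hγ₁0 hγ₁ hγ₂ hle h
    set A₁ := Zᵀ * Z + γ₁ • (1 : Matrix (Fin k) (Fin k) ℝ) with hA₁def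
    set A₂ := Zᵀ * Z + γ₂ • (1 : Matrix (Fin k) (Fin k) ℝ) with hA₂def
    have pd₁ : A₁.PosDef := myPosDefA Z hγ₁0 hγ₁
    have pd₂ : A₂.PosDef := myPosDefA Z (le_trans hγ₁0 hle) hγ₂
    have hdet₁ : IsUnit A₁.det := (Matrix.isUnit_iff_isUnit_det _).mp pd₁.isUnit
    have hdet₂ : IsUnit A₂.det := (Matrix.isUnit_iff_isUnit_det _).mp pd₂.isUnit
    have psd2 : (Z * A₂⁻¹ * Zᵀ).PosSemidef := by
      have := pd₂.inv.posSemidef.mul_mul_conjTranspose_same Z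
      simpa [conjTranspose_eq_transpose_of_trivial] using this
    refine ⟨myDiagNonneg psd2 h, ?_⟩
    have hA₂eq : A₂ = A₁ + (γ₂ - γ₁) • (1 : Matrix (Fin k) (Fin k) ℝ) := by
      rw [hA₁def, hA₂def]
      module
    have key := myKey hA₂eq hdet₁ hdet₂
    have hCpsd : ((γ₂ - γ₁) • (1 : Matrix (Fin k) (Fin k) ℝ)
        + ((γ₂ - γ₁) * (γ₂ - γ₁)) • A₁⁻¹).PosSemidef := by
      refine Matrix.PosSemidef.add ?_ (myPsdSmul pd₁.inv.posSemidef (mul_self_nonneg _))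
      rw [smul_one_eq_diagonal]
      exact Matrix.PosSemidef.diagonal (fun i => by simpa using sub_nonneg.mpr hle : (0 : Fin k → ℝ) ≤ fun _ => γ₂ - γ₁)
    have hSand : (A₂⁻¹ * ((γ₂ - γ₁) • (1 : Matrix (Fin k) (Fin k) ℝ)
        + ((γ₂ - γ₁) * (γ₂ - γ₁)) • A₁⁻¹) * A₂⁻¹).PosSemidef := by
      have := hCpsd.conjTranspose_mul_mul_same A₂⁻¹
      rwa [pd₂.inv.isHermitian.eq] at this
    have hDiff : (Z * (A₁⁻¹ - A₂⁻¹) * Zᵀ).PosSemidef := by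
      rw [key]
      have := hSand.mul_mul_conjTranspose_same Z
      simpa [conjTranspose_eq_transpose_of_trivial] using this
    have hsplit : Z * (A₁⁻¹ - A₂⁻¹) * Zᵀ = ridgeP Z γ₁ - ridgeP Z γ₂ := by
      simp only [ridgeP, ← hA₁def, ← hA₂def, Matrix.mul_sub, Matrix.sub_mul]
    have := myDiagNonneg hDiff h
    rw [hsplit, Matrix.sub_apply] at this
    linarith
  refine ⟨main, fun hdet γ hγ h => ?_⟩
  have hrank : Z.rank = k := by
    have h1 := Z.rank_transpose_mul_self
    have h2 := Matrix.rank_of_isUnit (Zᵀ * Z) ((Matrix.isUnit_iff_isUnit_det _).mpr hdet)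
    rw [Fintype.card_fin] at h2
    omega
  have hP0 : ridgeP Z 0 = Z * (Zᵀ * Z)⁻¹ * Zᵀ := by
    rw [ridgeP, zero_smul, add_zero]
  have := (main 0 γ le_rfl (fun hlt => absurd hlt (by omega))
    (fun hlt => absurd hlt (by omega)) hγ h).2
  rwa [hP0] at this
end

section
/- Suppose ZᵀZ is invertible (rank(Z) = k) and let P := Z(ZᵀZ)^{-1}Zᵀ. Then for every γ ≥ 0, ∑_{i=1}^n ∑_{j≠i} (P^γ_{ij})² ≥ ∑_{i=1}^n ∑_{j≠i} (P_{ij})² − 2√k · ‖P − P^γ‖_F, where ‖·‖_F denotes the Frobenius norm. -/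
open Matrix Finset

/-- The Frobenius norm `‖A‖_F = √(tr(AᵀA))`. -/
noncomputable def frobNorm {n : ℕ} (A : Matrix (Fin n) (Fin n) ℝ) : ℝ :=
  Real.sqrt (Matrix.trace (Aᵀ * A))

lemma trace_transpose_mul_self_eq {m n : ℕ} (X : Matrix (Fin m) (Fin n) ℝ) :
    Matrix.trace (Xᵀ * X) = ∑ p : Fin m × Fin n, (X p.1 p.2) ^ 2 := by
  rw [Fintype.sum_prod_type]
  simp only [Matrix.trace, Matrix.diag, Matrix.mul_apply, Matrix.transpose_apply, sq]
  exact Finset.sum_comm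

lemma trace_transpose_mul_self_nonneg {m n : ℕ} (X : Matrix (Fin m) (Fin n) ℝ) :
    0 ≤ Matrix.trace (Xᵀ * X) := by
  rw [trace_transpose_mul_self_eq]; positivity

/-- If `ZᵀZ` is invertible (so `rank(Z) = k`) and `P = Z(ZᵀZ)⁻¹Zᵀ`, then for all `γ ≥ 0`,
`∑_i ∑_{j ≠ i} (P^γ_{ij})² ≥ ∑_i ∑_{j ≠ i} (P_{ij})² - 2√k · ‖P - P^γ‖_F`. -/
theorem ridgeP_offdiag_lower_bound
    {n k : ℕ} (hk : 0 < k) (hkn : k ≤ n)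
    (Z : Matrix (Fin n) (Fin k) ℝ)
    (hinv : IsUnit (Zᵀ * Z).det)
    (γ : ℝ) (hγ : 0 ≤ γ) :
    (∑ i : Fin n, ∑ j ∈ Finset.univ.erase i, ((Z * (Zᵀ * Z)⁻¹ * Zᵀ) i j) ^ 2)
        - 2 * Real.sqrt (k : ℝ) * frobNorm (Z * (Zᵀ * Z)⁻¹ * Zᵀ - ridgeP Z γ) ≤
      ∑ i : Fin n, ∑ j ∈ Finset.univ.erase i, (ridgeP Z γ i j) ^ 2 := by
  set S : Matrix (Fin k) (Fin k) ℝ := Zᵀ * Z with hS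
  set M : Matrix (Fin k) (Fin k) ℝ := S + γ • 1 with hM
  have hSi : S⁻¹ * S = 1 := Matrix.nonsing_inv_mul _ hinv
  have hSi' : S * S⁻¹ = 1 := Matrix.mul_nonsing_inv _ hinv
  have hSt : Sᵀ = S := by rw [hS, Matrix.transpose_mul, Matrix.transpose_transpose]
  have hMt : Mᵀ = M := by
    rw [hM, Matrix.transpose_add, Matrix.transpose_smul, Matrix.transpose_one, hSt]
  -- M is invertible
  have hMdet : IsUnit M.det := by
    rw [isUnit_iff_ne_zero]
    intro hdet
    obtain ⟨v, hv0, hv⟩ := (Matrix.exists_mulVec_eq_zero_iff).2 hdet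
    have hMv : S *ᵥ v + γ • v = 0 := by
      rw [hM, Matrix.add_mulVec, Matrix.smul_mulVec, Matrix.one_mulVec] at hv
      exact hv
    have h1 : v ⬝ᵥ (S *ᵥ v) = (Z *ᵥ v) ⬝ᵥ (Z *ᵥ v) := by
      rw [hS, ← Matrix.mulVec_mulVec, Matrix.dotProduct_mulVec, Matrix.vecMul_transpose]
    have h1n : 0 ≤ v ⬝ᵥ (S *ᵥ v) := by
      rw [h1]; exact Finset.sum_nonneg fun i _ => mul_self_nonneg _
    have h2n : 0 ≤ v ⬝ᵥ v := Finset.sum_nonneg fun i _ => mul_self_nonneg _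
    have hzero : v ⬝ᵥ (S *ᵥ v) + γ * (v ⬝ᵥ v) = 0 := by
      have := congrArg (fun w => v ⬝ᵥ w) hMv
      simpa [dotProduct_add, dotProduct_smul, smul_eq_mul] using this
    have hZv : v ⬝ᵥ (S *ᵥ v) = 0 := by nlinarith [mul_nonneg hγ h2n]
    have hZv0 : Z *ᵥ v = 0 := by
      rw [h1] at hZv
      exact dotProduct_self_eq_zero.mp hZv
    have hSv : S *ᵥ v = 0 := by
      rw [hS, ← Matrix.mulVec_mulVec, hZv0, Matrix.mulVec_zero]
    have : v = 0 := by
      have := congrArg (fun w => S⁻¹ *ᵥ w) hSv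
      simpa [Matrix.mulVec_mulVec, hSi, Matrix.one_mulVec] using this
    exact hv0 this
  set T : Matrix (Fin k) (Fin k) ℝ := M⁻¹ with hT
  have hTM : T * M = 1 := Matrix.nonsing_inv_mul _ hMdet
  have hMT : M * T = 1 := Matrix.mul_nonsing_inv _ hMdet
  have hTt : Tᵀ = T := by rw [hT, Matrix.transpose_nonsing_inv, hMt]
  have hSit : S⁻¹ᵀ = S⁻¹ := by rw [Matrix.transpose_nonsing_inv, hSt]
  set P : Matrix (Fin n) (Fin n) ℝ := Z * S⁻¹ * Zᵀ with hP
  set Q : Matrix (Fin n) (Fin n) ℝ := Z * T * Zᵀ with hQ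
  have hQdef : ridgeP Z γ = Q := rfl
  have hPt : Pᵀ = P := by
    rw [hP, Matrix.transpose_mul, Matrix.transpose_mul, Matrix.transpose_transpose, hSit,
      Matrix.mul_assoc]
  have hQt : Qᵀ = Q := by
    rw [hQ, Matrix.transpose_mul, Matrix.transpose_mul, Matrix.transpose_transpose, hTt,
      Matrix.mul_assoc]
  -- trace of PᵀP is k
  have hPP : P * P = P := by
    rw [hP]
    simp only [Matrix.mul_assoc]
    rw [← Matrix.mul_assoc Zᵀ Z (S⁻¹ * Zᵀ), ← hS, ← Matrix.mul_assoc S⁻¹ S (S⁻¹ * Zᵀ), hSi,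
      Matrix.one_mul]
  have htrP : Matrix.trace (Pᵀ * P) = (k : ℝ) := by
    rw [hPt, hPP, hP, Matrix.trace_mul_comm, ← Matrix.mul_assoc, ← hS, hSi', Matrix.trace_one]
    simp
  -- trace of QᵀQ is at most k
  have hTS : T * S = 1 - γ • T := by
    have h : T * S + γ • T = 1 := by
      rw [← hTM, hM, Matrix.mul_add, Matrix.mul_smul, Matrix.mul_one]
    exact eq_sub_of_add_eq h
  have hTex : T = T * S * T + γ • (T * T) := by
    have h : (T * M) * T = T := by rw [hTM, Matrix.one_mul]
    rw [hM, Matrix.mul_add, Matrix.mul_smul, Matrix.mul_one, Matrix.add_mul,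
      Matrix.smul_mul] at h
    exact h.symm
  have hTST : (Z * T)ᵀ * (Z * T) = T * S * T := by
    rw [Matrix.transpose_mul, hTt, Matrix.mul_assoc T Zᵀ (Z * T), ← Matrix.mul_assoc Zᵀ Z T,
      ← hS, ← Matrix.mul_assoc T S T]
  have n2 : 0 ≤ Matrix.trace (T * S * T) := by
    rw [← hTST]; exact trace_transpose_mul_self_nonneg _
  have n3 : 0 ≤ Matrix.trace (T * T) := by
    have : T * T = Tᵀ * T := by rw [hTt]
    rw [this]; exact trace_transpose_mul_self_nonneg _
  have n4 : 0 ≤ Matrix.trace T := by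
    rw [hTex, Matrix.trace_add, Matrix.trace_smul, smul_eq_mul]
    have := mul_nonneg hγ n3
    linarith
  have htrTS : Matrix.trace (T * S) = (k : ℝ) - γ * Matrix.trace T := by
    rw [hTS, Matrix.trace_sub, Matrix.trace_smul, Matrix.trace_one, smul_eq_mul]
    simp
  have hQQtr : Matrix.trace (Qᵀ * Q) = Matrix.trace ((T * S) * (T * S)) := by
    rw [hQt, hQ]
    simp only [Matrix.mul_assoc]
    rw [← Matrix.mul_assoc Zᵀ Z, ← hS, Matrix.trace_mul_comm]
    simp only [Matrix.mul_assoc]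
    rw [← hS]
  have htrQ : Matrix.trace (Qᵀ * Q) ≤ (k : ℝ) := by
    rw [hQQtr]
    have : (T * S) * (T * S) = T * S - γ • ((T * S) * T) := by
      nth_rewrite 2 [hTS]
      rw [Matrix.mul_sub, Matrix.mul_one, Matrix.mul_smul]
    rw [this, Matrix.trace_sub, Matrix.trace_smul, smul_eq_mul, htrTS,
      Matrix.mul_assoc]
    have h2 := mul_nonneg hγ n2
    rw [Matrix.mul_assoc] at h2
    have h4 := mul_nonneg hγ n4
    linarith
  -- reduce double sums over erased sets to sums over off-diagonal pairs
  set s : Finset (Fin n × Fin n) := Finset.univ.filter (fun p => p.2 ≠ p.1) with hs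
  have key : ∀ f : Fin n → Fin n → ℝ,
      (∑ i : Fin n, ∑ j ∈ Finset.univ.erase i, f i j) = ∑ p ∈ s, f p.1 p.2 := by
    intro f
    rw [hs, Finset.sum_filter, Fintype.sum_prod_type]
    refine Finset.sum_congr rfl fun i _ => ?_
    rw [← Finset.filter_ne', Finset.sum_filter]
  -- entrywise sums and Frobenius norms
  have sum_le_tr : ∀ X : Matrix (Fin n) (Fin n) ℝ,
      (∑ p ∈ s, (X p.1 p.2) ^ 2) ≤ Matrix.trace (Xᵀ * X) := by
    intro X
    rw [trace_transpose_mul_self_eq]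
    exact Finset.sum_le_sum_of_subset_of_nonneg (Finset.subset_univ s)
      (fun p _ _ => sq_nonneg _)
  -- Cauchy-Schwarz on off-diagonal pairs
  have cs : (∑ p ∈ s, (P p.1 p.2) ^ 2) - (∑ p ∈ s, (Q p.1 p.2) ^ 2)
      ≤ Real.sqrt (∑ p ∈ s, ((P - Q) p.1 p.2) ^ 2)
        * Real.sqrt (∑ p ∈ s, ((P + Q) p.1 p.2) ^ 2) := by
    have h := Real.sum_mul_le_sqrt_mul_sqrt s
      (fun p => (P - Q) p.1 p.2) (fun p => (P + Q) p.1 p.2)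
    have heq : (∑ p ∈ s, (P p.1 p.2) ^ 2) - (∑ p ∈ s, (Q p.1 p.2) ^ 2)
        = ∑ p ∈ s, ((P - Q) p.1 p.2 * (P + Q) p.1 p.2) := by
      rw [← Finset.sum_sub_distrib]
      refine Finset.sum_congr rfl fun p _ => ?_
      simp only [Matrix.sub_apply, Matrix.add_apply]
      ring
    rw [heq]
    exact h
  -- triangle inequality for the Frobenius norm
  have htri : Real.sqrt (Matrix.trace ((P + Q)ᵀ * (P + Q)))
      ≤ Real.sqrt (Matrix.trace (Pᵀ * P)) + Real.sqrt (Matrix.trace (Qᵀ * Q)) := by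
    have hPn := trace_transpose_mul_self_nonneg P
    have hQn := trace_transpose_mul_self_nonneg Q
    have hcs := Real.sum_mul_le_sqrt_mul_sqrt (Finset.univ : Finset (Fin n × Fin n))
      (fun p => P p.1 p.2) (fun p => Q p.1 p.2)
    have hexp : Matrix.trace ((P + Q)ᵀ * (P + Q))
        = Matrix.trace (Pᵀ * P) + 2 * (∑ p : Fin n × Fin n, P p.1 p.2 * Q p.1 p.2)
          + Matrix.trace (Qᵀ * Q) := by
      rw [trace_transpose_mul_self_eq, trace_transpose_mul_self_eq,
        trace_transpose_mul_self_eq, Finset.mul_sum, ← Finset.sum_add_distrib,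
        ← Finset.sum_add_distrib]
      refine Finset.sum_congr rfl fun p _ => ?_
      simp only [Matrix.add_apply]
      ring
    have hb : Matrix.trace ((P + Q)ᵀ * (P + Q))
        ≤ (Real.sqrt (Matrix.trace (Pᵀ * P)) + Real.sqrt (Matrix.trace (Qᵀ * Q))) ^ 2 := by
      rw [hexp, add_sq, Real.sq_sqrt hPn, Real.sq_sqrt hQn]
      have := hcs
      rw [← trace_transpose_mul_self_eq, ← trace_transpose_mul_self_eq] at this
      linarith
    calc Real.sqrt (Matrix.trace ((P + Q)ᵀ * (P + Q)))
        ≤ Real.sqrt ((Real.sqrt (Matrix.trace (Pᵀ * P))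
            + Real.sqrt (Matrix.trace (Qᵀ * Q))) ^ 2) := Real.sqrt_le_sqrt hb
      _ = Real.sqrt (Matrix.trace (Pᵀ * P)) + Real.sqrt (Matrix.trace (Qᵀ * Q)) :=
          Real.sqrt_sq (by positivity)
  -- assemble
  have hfP : Real.sqrt (Matrix.trace (Pᵀ * P)) = Real.sqrt (k : ℝ) := by rw [htrP]
  have hfQ : Real.sqrt (Matrix.trace (Qᵀ * Q)) ≤ Real.sqrt (k : ℝ) :=
    Real.sqrt_le_sqrt htrQ
  have hD : Real.sqrt (∑ p ∈ s, ((P - Q) p.1 p.2) ^ 2) ≤ frobNorm (P - Q) :=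
    Real.sqrt_le_sqrt (sum_le_tr _)
  have hE : Real.sqrt (∑ p ∈ s, ((P + Q) p.1 p.2) ^ 2) ≤ 2 * Real.sqrt (k : ℝ) := by
    calc Real.sqrt (∑ p ∈ s, ((P + Q) p.1 p.2) ^ 2)
        ≤ Real.sqrt (Matrix.trace ((P + Q)ᵀ * (P + Q))) := Real.sqrt_le_sqrt (sum_le_tr _)
      _ ≤ Real.sqrt (Matrix.trace (Pᵀ * P)) + Real.sqrt (Matrix.trace (Qᵀ * Q)) := htri
      _ ≤ 2 * Real.sqrt (k : ℝ) := by rw [hfP]; linarith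
  have hmain : (∑ p ∈ s, (P p.1 p.2) ^ 2) - (∑ p ∈ s, (Q p.1 p.2) ^ 2)
      ≤ frobNorm (P - Q) * (2 * Real.sqrt (k : ℝ)) := by
    refine le_trans cs ?_
    exact mul_le_mul hD hE (Real.sqrt_nonneg _) (Real.sqrt_nonneg _)
  rw [hQdef, key (fun i j => (P i j) ^ 2), key (fun i j => (Q i j) ^ 2)]
  have hfnn : 0 ≤ frobNorm (P - Q) := Real.sqrt_nonneg _
  linarith [hmain]
end
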